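/- arXiv:2209.04302 — 5 statements merged into one kernel-verified Lean document; each statement's English description precedes it below -/
import Mathlib

section
/- If P is a generator path for odd n, then the family {P_0, P_1, …, P_{n-1}} of all n rotations of P (where P_i is obtained by adding i to both endpoints of every edge of P, modulo n) is a separating path system for K_n. Consequently f(K_n) ≤ n. -/
open SimpleGraph Finset

/-- `A` separates edges `e` and `e'`: exactly one of them lies in `A`. -/
def EdgeSeparates {V : Type*} (A : Finset (Sym2 V)) (e e' : Sym2 V) : Prop :=
  (e ∈ A ∧ e' ∉ A) ∨ (e' ∈ A ∧ e ∉ A)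

/-- `P` is the edge set of a path in `G`. -/
def IsPathEdgeSet {V : Type*} [DecidableEq V] (G : SimpleGraph V) (P : Finset (Sym2 V)) : Prop :=
  ∃ (u v : V) (w : G.Walk u v), w.IsPath ∧ P = w.edges.toFinset

/-- A separating system of `G`: a family of edge subsets separating every pair of
distinct edges of `G`. -/
def IsSepSystem {V : Type*} (G : SimpleGraph V) (S : Finset (Finset (Sym2 V))) : Prop :=
  (∀ P ∈ S, ∀ e ∈ P, e ∈ G.edgeSet) ∧
  ∀ e ∈ G.edgeSet, ∀ e' ∈ G.edgeSet, e ≠ e' → ∃ P ∈ S, EdgeSeparates P e e'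

/-- A separating path system of `G`. -/
def IsSepPathSystem {V : Type*} [DecidableEq V] (G : SimpleGraph V)
    (S : Finset (Finset (Sym2 V))) : Prop :=
  (∀ P ∈ S, IsPathEdgeSet G P) ∧
  ∀ e ∈ G.edgeSet, ∀ e' ∈ G.edgeSet, e ≠ e' → ∃ P ∈ S, EdgeSeparates P e e'

/-- `f(G)`: minimum size of a separating path system of `G`. -/
noncomputable def sepPathNumber {V : Type*} [DecidableEq V] (G : SimpleGraph V) : ℕ :=
  sInf {k | ∃ S : Finset (Finset (Sym2 V)), IsSepPathSystem G S ∧ S.card = k}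

/-- Clockwise distance between two vertices of `ZMod n`. -/
def cdist (n : ℕ) (v u : ZMod n) : ℕ := min (v - u).val (u - v).val

/-- The type of an edge of `K_n` with vertex set `ZMod n`. -/
def edgeType (n : ℕ) : Sym2 (ZMod n) → ℕ :=
  Sym2.lift ⟨fun u v => cdist n u v, fun u v => min_comm _ _⟩

/-- Number of edges of type `x` in `E`. -/
def typeCount (n : ℕ) (E : Finset (Sym2 (ZMod n))) (x : ℕ) : ℕ :=
  (E.filter fun e => edgeType n e = x).card

/-- The rotation of an edge set by `i`. -/
def rotEdges (n : ℕ) (i : ZMod n) (E : Finset (Sym2 (ZMod n))) : Finset (Sym2 (ZMod n)) :=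
  E.image (Sym2.map (· + i))

/-- (GP1): at least one edge of each type. -/
def GP1 (n : ℕ) (E : Finset (Sym2 (ZMod n))) : Prop :=
  ∀ x : ℕ, 1 ≤ x → x ≤ (n - 1) / 2 → 1 ≤ typeCount n E x

/-- (GP2): at most one type appears exactly once, no type more than twice. -/
def GP2 (n : ℕ) (E : Finset (Sym2 (ZMod n))) : Prop :=
  (∀ x : ℕ, typeCount n E x ≤ 2) ∧ {x : ℕ | typeCount n E x = 1}.Subsingleton

/-- (GP3): clockwise distances between same-type pairs are distinct across types. -/
def GP3 (n : ℕ) (E : Finset (Sym2 (ZMod n))) : Prop :=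
  ∀ x y : ℕ, x ≠ y → ∀ v v' u u' : ZMod n,
    edgeType n s(v, v + (x : ZMod n)) = x →
    edgeType n s(u, u + (y : ZMod n)) = y →
    s(v, v + (x : ZMod n)) ∈ E → s(v', v' + (x : ZMod n)) ∈ E → v ≠ v' →
    s(u, u + (y : ZMod n)) ∈ E → s(u', u' + (y : ZMod n)) ∈ E → u ≠ u' →
    cdist n v v' ≠ cdist n u u'

/-- A generator path for odd `n`. -/
def IsGenPath (n : ℕ) (E : Finset (Sym2 (ZMod n))) : Prop :=
  IsPathEdgeSet (⊤ : SimpleGraph (ZMod n)) E ∧ GP1 n E ∧ GP2 n E ∧ GP3 n E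

/- ======================= auxiliary lemmas ======================= -/

lemma edgeType_pair (n : ℕ) (u v : ZMod n) : edgeType n s(u, v) = cdist n u v := rfl

lemma two_cancel {n : ℕ} (hodd : Odd n) [NeZero n] {c : ZMod n} (h : c + c = 0) : c = 0 := by
  have h2 : IsUnit ((2 : ℕ) : ZMod n) :=
    (ZMod.isUnit_iff_coprime 2 n).2 (Nat.coprime_two_left.mpr hodd)
  have h3 : ((2 : ℕ) : ZMod n) * c = 0 := by
    have : ((2 : ℕ) : ZMod n) = 2 := by norm_cast
    rw [this, two_mul, h]
  obtain ⟨u, hu⟩ := h2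
  have h4 := congrArg (fun z => ((u⁻¹ : (ZMod n)ˣ) : ZMod n) * z) h3
  simp only [← hu, ← mul_assoc] at h4
  simpa using h4

lemma type_eval {n x : ℕ} [NeZero n] (hx1 : 1 ≤ x) (hx2 : 2 * x < n)
    (v : ZMod n) : edgeType n s(v, v + (x : ZMod n)) = x := by
  have hxn : x < n := by omega
  have hval : ((x : ZMod n)).val = x := ZMod.val_cast_of_lt hxn
  have hne : (x : ZMod n) ≠ 0 := by
    intro h; rw [h, ZMod.val_zero] at hval; omega
  rw [edgeType_pair, cdist]
  have h1 : (v - (v + (x : ZMod n))) = -(x : ZMod n) := by ring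
  have h2 : ((v + (x : ZMod n)) - v) = (x : ZMod n) := by ring
  rw [h1, h2, ZMod.neg_val, if_neg hne, hval]
  omega

lemma canon {n : ℕ} [NeZero n] (hodd : Odd n) {e : Sym2 (ZMod n)} (he : ¬ e.IsDiag) :
    ∃ v : ZMod n, e = s(v, v + ((edgeType n e : ℕ) : ZMod n)) ∧
      1 ≤ edgeType n e ∧ 2 * edgeType n e < n := by
  obtain ⟨m, hm⟩ := hodd
  induction e with
  | _ a b =>
    have hab : a ≠ b := by simpa using he
    set c : ZMod n := b - a with hc
    have hc0 : c ≠ 0 := sub_ne_zero.mpr (Ne.symm hab)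
    have hcv1 : 1 ≤ c.val := by
      have : c.val ≠ 0 := fun h => hc0 ((ZMod.val_eq_zero c).mp h)
      omega
    have hcvn : c.val < n := ZMod.val_lt c
    have hneg : (-c).val = n - c.val := by rw [ZMod.neg_val, if_neg hc0]
    have hety : edgeType n s(a, b) = min (n - c.val) c.val := by
      rw [edgeType_pair, cdist]
      have h1 : a - b = -c := by rw [hc]; ring
      rw [h1, hneg, hc]
    have hcast : ((c.val : ℕ) : ZMod n) = c := by
      simp [ZMod.natCast_val, ZMod.cast_id]
    rcases le_or_gt c.val (n - c.val) with h | h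
    · refine ⟨a, ?_, ?_, ?_⟩
      · have hx : edgeType n s(a, b) = c.val := by rw [hety]; omega
        rw [hx, hcast]
        have : a + c = b := by rw [hc]; ring
        rw [this]
      · rw [hety]; omega
      · rw [hety]; omega
    · have hnegcast : (((-c).val : ℕ) : ZMod n) = -c := by
        simp [ZMod.natCast_val, ZMod.cast_id]
      refine ⟨b, ?_, ?_, ?_⟩
      · have hx : edgeType n s(a, b) = (-c).val := by rw [hety, hneg]; omega
        rw [hx, hnegcast]
        have : b + -c = a := by rw [hc]; ring
        rw [this, Sym2.eq_swap]
      · rw [hety]; omega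
      · rw [hety]; omega

lemma mem_rotEdges {n : ℕ} (E : Finset (Sym2 (ZMod n))) (i : ZMod n) (e : Sym2 (ZMod n)) :
    e ∈ rotEdges n i E ↔ Sym2.map (· + (-i)) e ∈ E := by
  constructor
  · rintro h
    rw [rotEdges, Finset.mem_image] at h
    obtain ⟨f, hf, rfl⟩ := h
    rwa [Sym2.map_map, show ((· + (-i)) ∘ (· + i)) = id by funext z; simp, Sym2.map_id, id_eq]
  · intro h
    rw [rotEdges, Finset.mem_image]
    refine ⟨Sym2.map (· + (-i)) e, h, ?_⟩
    rw [Sym2.map_map, show ((· + i) ∘ (· + (-i))) = id by funext z; simp, Sym2.map_id, id_eq]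

lemma pair_mem_rotEdges {n : ℕ} (E : Finset (Sym2 (ZMod n))) (i w c : ZMod n) :
    s(w, w + c) ∈ rotEdges n i E ↔ s(w - i, (w - i) + c) ∈ E := by
  rw [mem_rotEdges, Sym2.map_pair_eq]
  have h1 : w + -i = w - i := by ring
  have h2 : w + c + -i = (w - i) + c := by ring
  rw [h1, h2]

/-- Starting vertices of `x`-type edges in `E`. -/
def startSet (n : ℕ) [NeZero n] (E : Finset (Sym2 (ZMod n))) (x : ℕ) : Finset (ZMod n) :=
  Finset.univ.filter (fun v : ZMod n => s(v, v + (x : ZMod n)) ∈ E)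

lemma pair_inj {n x : ℕ} [NeZero n] (hx1 : 1 ≤ x) (hx2 : 2 * x < n) {v v' : ZMod n}
    (h : s(v, v + (x : ZMod n)) = s(v', v' + (x : ZMod n))) : v = v' := by
  rw [Sym2.eq_iff] at h
  rcases h with ⟨h1, _⟩ | ⟨h1, h2⟩
  · exact h1
  · exfalso
    have : (x : ZMod n) + (x : ZMod n) = 0 := by
      have := h2.symm.trans (congrArg (· + (x : ZMod n)) h1)
      beta_reduce at this
      -- v + x = v' and v = v' + x ⇒ v = v + x + x
      have hv : v = v + ((x : ZMod n) + (x : ZMod n)) := by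
        conv_lhs => rw [h1]
        rw [← h2]; ring
      have := (left_eq_add).mp hv
      exact this
    have hcast : ((2 * x : ℕ) : ZMod n) = 0 := by push_cast; rw [two_mul]; exact this
    have := (ZMod.natCast_eq_zero_iff (2 * x) n).mp hcast
    have := Nat.le_of_dvd (by omega) this
    omega

lemma typeCount_eq_card {n x : ℕ} [NeZero n] (hodd : Odd n) (hx1 : 1 ≤ x) (hx2 : 2 * x < n)
    (E : Finset (Sym2 (ZMod n))) (hnd : ∀ e ∈ E, ¬ e.IsDiag) :
    typeCount n E x = (startSet n E x).card := by
  rw [typeCount]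
  apply (Finset.card_bij (fun v _ => s(v, v + (x : ZMod n))) ?_ ?_ ?_).symm
  · intro v hv
    rw [startSet, Finset.mem_filter] at hv
    rw [Finset.mem_filter]
    exact ⟨hv.2, type_eval hx1 hx2 v⟩
  · intro v hv v' hv' h
    exact pair_inj hx1 hx2 h
  · intro e he
    rw [Finset.mem_filter] at he
    obtain ⟨v, hv, _, _⟩ := canon hodd (hnd e he.1)
    rw [he.2] at hv
    refine ⟨v, ?_, hv.symm⟩
    rw [startSet, Finset.mem_filter]
    exact ⟨Finset.mem_univ _, hv ▸ he.1⟩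

lemma filter_rot_eq_image {n x : ℕ} [NeZero n] (E : Finset (Sym2 (ZMod n))) (w : ZMod n) :
    (Finset.univ.filter fun i : ZMod n => s(w, w + (x : ZMod n)) ∈ rotEdges n i E)
      = (startSet n E x).image (fun v => w - v) := by
  ext i
  rw [Finset.mem_filter, pair_mem_rotEdges, Finset.mem_image]
  constructor
  · intro h
    refine ⟨w - i, ?_, by ring⟩
    rw [startSet, Finset.mem_filter]
    exact ⟨Finset.mem_univ _, h.2⟩
  · rintro ⟨v, hv, rfl⟩
    rw [startSet, Finset.mem_filter] at hv
    refine ⟨Finset.mem_univ _, ?_⟩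
    have : w - (w - v) = v := by ring
    rw [this]
    exact hv.2

lemma core {n : ℕ} [NeZero n] (hodd : Odd n) (E : Finset (Sym2 (ZMod n)))
    (hgp1 : GP1 n E) (hgp2 : GP2 n E) (hgp3 : GP3 n E)
    (hnd : ∀ f ∈ E, ¬ f.IsDiag) (x y : ℕ)
    (hx1 : 1 ≤ x) (hx2 : 2 * x < n) (hy1 : 1 ≤ y) (hy2 : 2 * y < n) (v u : ZMod n)
    (hM : (startSet n E x).image (fun s => v - s) = (startSet n E y).image (fun s => u - s)) :
    x = y ∧ v = u := by
  obtain ⟨m, hm⟩ := id hodd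
  have hcx := typeCount_eq_card hodd hx1 hx2 E hnd
  have hcy := typeCount_eq_card hodd hy1 hy2 E hnd
  have hinj : ∀ w : ZMod n, Function.Injective (fun s : ZMod n => w - s) := by
    intro w a b h
    simpa using sub_right_injective h
  have hcards : (startSet n E x).card = (startSet n E y).card := by
    rw [← Finset.card_image_of_injective _ (hinj v), hM,
      Finset.card_image_of_injective _ (hinj u)]
  have hxle : x ≤ (n - 1) / 2 := by omega
  have hyle : y ≤ (n - 1) / 2 := by omega
  have h1x : 1 ≤ (startSet n E x).card := hcx ▸ hgp1 x hx1 hxle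
  have h2x : (startSet n E x).card ≤ 2 := hcx ▸ hgp2.1 x
  by_cases hxy : x = y
  · subst hxy
    refine ⟨rfl, ?_⟩
    rcases (by omega : (startSet n E x).card = 1 ∨ (startSet n E x).card = 2) with h | h
    · obtain ⟨a, ha⟩ := Finset.card_eq_one.mp h
      rw [ha, Finset.image_singleton, Finset.image_singleton] at hM
      have h1 : v - a = u - a := Finset.singleton_injective hM
      have := sub_left_injective h1
      exact this
    · obtain ⟨a, b, hab, hset⟩ := Finset.card_eq_two.mp h
      rw [hset] at hM
      simp only [Finset.image_insert, Finset.image_singleton] at hM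
      have h1 : v - a = u - a ∨ v - a = u - b := by
        have : v - a ∈ ({u - a, u - b} : Finset (ZMod n)) := by rw [← hM]; simp
        simpa using this
      have h2 : v - b = u - a ∨ v - b = u - b := by
        have : v - b ∈ ({u - a, u - b} : Finset (ZMod n)) := by rw [← hM]; simp
        simpa using this
      rcases h1 with h1 | h1
      · exact sub_left_injective h1
      · rcases h2 with h2 | h2
        · exfalso
          apply hab
          have h3 : b - a = a - b := by
            calc b - a = (v - a) - (v - b) := by ring
              _ = (u - b) - (u - a) := by rw [h1, h2]
              _ = a - b := by ring
          have h4 : (b - a) + (a - b) = 0 := by ring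
          rw [← h3] at h4
          have h5 := two_cancel hodd h4
          exact (sub_eq_zero.mp h5).symm
        · exact sub_left_injective h2
  · exfalso
    have h1y : 1 ≤ (startSet n E y).card := hcy ▸ hgp1 y hy1 hyle
    rcases (by omega : (startSet n E x).card = 1 ∨ (startSet n E x).card = 2) with h | h
    · have hx' : typeCount n E x = 1 := by omega
      have hy' : typeCount n E y = 1 := by omega
      exact hxy (hgp2.2 hx' hy')
    · have hYcard : (startSet n E y).card = 2 := by omega
      obtain ⟨a, b, hab, hsetx⟩ := Finset.card_eq_two.mp h
      obtain ⟨p, q, hpq, hsety⟩ := Finset.card_eq_two.mp hYcard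
      have haE : s(a, a + (x : ZMod n)) ∈ E := by
        have : a ∈ startSet n E x := by rw [hsetx]; simp
        exact (Finset.mem_filter.mp this).2
      have hbE : s(b, b + (x : ZMod n)) ∈ E := by
        have : b ∈ startSet n E x := by rw [hsetx]; simp
        exact (Finset.mem_filter.mp this).2
      have hpE : s(p, p + (y : ZMod n)) ∈ E := by
        have : p ∈ startSet n E y := by rw [hsety]; simp
        exact (Finset.mem_filter.mp this).2
      have hqE : s(q, q + (y : ZMod n)) ∈ E := by
        have : q ∈ startSet n E y := by rw [hsety]; simp
        exact (Finset.mem_filter.mp this).2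
      rw [hsetx, hsety] at hM
      simp only [Finset.image_insert, Finset.image_singleton] at hM
      have h1 : v - a = u - p ∨ v - a = u - q := by
        have : v - a ∈ ({u - p, u - q} : Finset (ZMod n)) := by rw [← hM]; simp
        simpa using this
      have h2 : v - b = u - p ∨ v - b = u - q := by
        have : v - b ∈ ({u - p, u - q} : Finset (ZMod n)) := by rw [← hM]; simp
        simpa using this
      have hgoal : cdist n a b = cdist n p q := by
        rcases h1 with h1 | h1 <;> rcases h2 with h2 | h2
        · exact absurd (sub_right_injective (h1.trans h2.symm)) hab
        · have e1 : a - b = p - q := by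
            calc a - b = (v - b) - (v - a) := by ring
              _ = (u - q) - (u - p) := by rw [h1, h2]
              _ = p - q := by ring
          have e2 : b - a = q - p := by
            calc b - a = -(a - b) := by ring
              _ = -(p - q) := by rw [e1]
              _ = q - p := by ring
          simp only [cdist, e1, e2]
        · have e1 : a - b = q - p := by
            calc a - b = (v - b) - (v - a) := by ring
              _ = (u - p) - (u - q) := by rw [h1, h2]
              _ = q - p := by ring
          have e2 : b - a = p - q := by
            calc b - a = -(a - b) := by ring
              _ = -(q - p) := by rw [e1]
              _ = p - q := by ring
          simp only [cdist, e1, e2]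
          exact min_comm _ _
        · exact absurd (sub_right_injective (h1.trans h2.symm)) hab
      exact hgp3 x y hxy a b p q (type_eval hx1 hx2 a) (type_eval hy1 hy2 p)
        haE hbE hab hpE hqE hpq hgoal

lemma separation {n : ℕ} [NeZero n] (hodd : Odd n)
    (E : Finset (Sym2 (ZMod n))) (hE : IsGenPath n E)
    {e e' : Sym2 (ZMod n)} (he : ¬ e.IsDiag) (he' : ¬ e'.IsDiag) (hne : e ≠ e') :
    ∃ i : ZMod n, EdgeSeparates (rotEdges n i E) e e' := by
  obtain ⟨hpath, hgp1, hgp2, hgp3⟩ := hE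
  have hnd : ∀ f ∈ E, ¬ f.IsDiag := by
    obtain ⟨a, b, w, hw, rfl⟩ := hpath
    intro f hf
    have := w.edges_subset_edgeSet (List.mem_toFinset.mp hf)
    rwa [SimpleGraph.edgeSet_top, Set.mem_compl_iff, Sym2.mem_diagSet] at this
  by_contra hcon
  push_neg at hcon
  have hiff : ∀ i : ZMod n, e ∈ rotEdges n i E ↔ e' ∈ rotEdges n i E := by
    intro i
    have := hcon i
    rw [EdgeSeparates] at this
    tauto
  obtain ⟨v, hev, hx1, hx2⟩ := canon hodd he
  obtain ⟨u, heu, hy1, hy2⟩ := canon hodd he'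
  have hM : (startSet n E (edgeType n e)).image (fun s => v - s)
      = (startSet n E (edgeType n e')).image (fun s => u - s) := by
    rw [← filter_rot_eq_image E v, ← filter_rot_eq_image E u]
    ext i
    rw [Finset.mem_filter, Finset.mem_filter, ← hev, ← heu]
    exact and_congr_right fun _ => hiff i
  obtain ⟨hxy, hvu⟩ := core hodd E hgp1 hgp2 hgp3 hnd _ _ hx1 hx2 hy1 hy2 v u hM
  apply hne
  rw [hev, heu, hxy, hvu]

def rotHom (n : ℕ) (i : ZMod n) : (⊤ : SimpleGraph (ZMod n)) →g (⊤ : SimpleGraph (ZMod n)) where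
  toFun := fun z => z + i
  map_rel' := by
    intro a b h
    simp only [top_adj] at h ⊢
    exact fun hc => h (add_right_cancel hc)

/-- The `n` rotations of a generator path form a separating path system of `K_n`;
hence `f(K_n) ≤ n`. -/
theorem stmt5 (n : ℕ) (hodd : Odd n) (hn : 3 ≤ n) (E : Finset (Sym2 (ZMod n)))
    (hE : IsGenPath n E) :
    IsSepPathSystem (⊤ : SimpleGraph (ZMod n))
      ((Finset.range n).image fun i : ℕ => rotEdges n (i : ZMod n) E) ∧
    sepPathNumber (⊤ : SimpleGraph (ZMod n)) ≤ n := by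
  haveI : NeZero n := ⟨by omega⟩
  set S := (Finset.range n).image fun i : ℕ => rotEdges n (i : ZMod n) E with hS
  have hsep : IsSepPathSystem (⊤ : SimpleGraph (ZMod n)) S := by
    constructor
    · intro P hP
      rw [hS, Finset.mem_image] at hP
      obtain ⟨i, _, rfl⟩ := hP
      obtain ⟨a, b, w, hw, hEw⟩ := hE.1
      refine ⟨a + (i : ZMod n), b + (i : ZMod n), w.map (rotHom n (i : ZMod n)),
        Walk.map_isPath_of_injective (fun z z' h => add_right_cancel h) hw, ?_⟩
      rw [hEw]
      change _ = (w.map (rotHom n (i : ZMod n))).edges.toFinset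
      ext f
      simp only [rotEdges, Finset.mem_image, List.mem_toFinset, Walk.edges_map, List.mem_map]
      constructor
      · rintro ⟨g, hg, rfl⟩
        exact ⟨g, hg, rfl⟩
      · rintro ⟨g, hg, rfl⟩
        exact ⟨g, hg, rfl⟩
      
    · intro e he e' he' hne
      have hee : ¬ e.IsDiag := by rwa [SimpleGraph.edgeSet_top, Set.mem_compl_iff, Sym2.mem_diagSet] at he
      have hee' : ¬ e'.IsDiag := by rwa [SimpleGraph.edgeSet_top, Set.mem_compl_iff, Sym2.mem_diagSet] at he'
      obtain ⟨i, hi⟩ := separation hodd E hE hee hee' hne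
      refine ⟨rotEdges n i E, ?_, hi⟩
      rw [hS, Finset.mem_image]
      exact ⟨i.val, Finset.mem_range.mpr (ZMod.val_lt i), by
        rw [ZMod.natCast_val, ZMod.cast_id]⟩
  refine ⟨hsep, ?_⟩
  have hcard : S.card ≤ n := by
    calc S.card ≤ (Finset.range n).card := Finset.card_image_le
      _ = n := Finset.card_range n
  calc sepPathNumber (⊤ : SimpleGraph (ZMod n)) ≤ S.card := Nat.sInf_le ⟨S, hsep, rfl⟩
    _ ≤ n := hcard
end

section
/- Let p be an odd prime, g a primitive root modulo p, and k = (p-1)/2. Then for any j, m ∈ [k] with j ≠ m, we have (g^{k+j+1} - g^j)/(g-1) ≢ ±(g^{k+m+1} - g^m)/(g-1) (mod p). -/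
open SimpleGraph Finset

/-- For `j ≠ m` in `[k]`, `k = (p-1)/2`, the quantities
`(g^{k+j+1} - g^j)/(g-1)` are distinct and not negatives of each other mod `p`. -/
theorem stmt7 (p : ℕ) [Fact p.Prime] (hodd : Odd p) (g : ZMod p)
    (hg : orderOf g = p - 1) (j m : ℕ)
    (hj : j ∈ Finset.Icc 1 ((p - 1) / 2)) (hm : m ∈ Finset.Icc 1 ((p - 1) / 2))
    (hjm : j ≠ m) :
    (g ^ ((p - 1) / 2 + j + 1) - g ^ j) / (g - 1) ≠
      (g ^ ((p - 1) / 2 + m + 1) - g ^ m) / (g - 1) ∧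
    (g ^ ((p - 1) / 2 + j + 1) - g ^ j) / (g - 1) ≠
      -((g ^ ((p - 1) / 2 + m + 1) - g ^ m) / (g - 1)) := by
  have pp := (Fact.out : p.Prime)
  obtain ⟨t, ht⟩ := hodd
  have hp3 : 3 ≤ p := by
    rcases pp.eq_two_or_odd' with h2 | _
    · omega
    · have := pp.two_le; omega
  have ht1 : 1 ≤ t := by omega
  have hk : (p - 1) / 2 = t := by omega
  rw [hk] at hj hm ⊢
  rw [Finset.mem_Icc] at hj hm
  have hord : g ^ (p - 1) = 1 := hg ▸ pow_orderOf_eq_one g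
  have hg0 : g ≠ 0 := by
    intro h
    rw [h, zero_pow (by omega : p - 1 ≠ 0)] at hord
    exact zero_ne_one hord
  have hg1 : g - 1 ≠ 0 := by
    intro h
    have : g = 1 := by linear_combination h
    rw [this, orderOf_one] at hg
    omega
  -- g^t = -1
  have hneg : g ^ t = -1 := by
    have hsq : g ^ t * g ^ t = 1 := by
      rw [← pow_add, show t + t = p - 1 by omega]; exact hord
    rcases mul_self_eq_one_iff.mp hsq with h1 | h1
    · exfalso
      have := orderOf_dvd_of_pow_eq_one h1
      rw [hg] at this
      have := Nat.le_of_dvd (by omega) this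
      omega
    · exact h1
  -- p ≠ 3, hence g + 1 ≠ 0
  have hpne3 : p ≠ 3 := by
    intro h
    have : t = 1 := by omega
    omega
  have hp5 : 5 ≤ p := by
    rcases pp.eq_two_or_odd' with h2 | hoddp
    · omega
    · have h4 : p ≠ 4 := by rintro rfl; exact (by norm_num : ¬ Nat.Prime 4) pp
      omega
  have hga : g + 1 ≠ 0 := by
    intro h
    have hgm1 : g = -1 := by linear_combination h
    have h2 : g ^ 2 = 1 := by rw [hgm1]; ring
    have := orderOf_dvd_of_pow_eq_one h2
    rw [hg] at this
    have := Nat.le_of_dvd (by omega) this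
    omega
  -- key injectivity helper
  have haux : ∀ a b : ℕ, a < b → b - a < p - 1 → g ^ a ≠ g ^ b := by
    intro a b hab hlt h
    have h2 : g ^ a * g ^ (b - a) = g ^ a * 1 := by
      rw [← pow_add, mul_one, show a + (b - a) = b by omega, ← h]
    have h1 : g ^ (b - a) = 1 := mul_left_cancel₀ (pow_ne_zero a hg0) h2
    have := orderOf_dvd_of_pow_eq_one h1
    rw [hg] at this
    have := Nat.le_of_dvd (by omega) this
    omega
  have hnum : ∀ i : ℕ, g ^ (t + i + 1) - g ^ i = -(g ^ i * (g + 1)) := by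
    intro i
    rw [show t + i + 1 = t + (i + 1) by ring, pow_add, hneg, pow_succ]
    ring
  have hdiv : ∀ a b : ZMod p, a / (g - 1) = b / (g - 1) → a = b := by
    intro a b h
    field_simp at h
    exact h
  rw [hnum j, hnum m]
  constructor
  · intro h
    have h' : -(g ^ j * (g + 1)) = -(g ^ m * (g + 1)) := hdiv _ _ h
    have hjm' : g ^ j = g ^ m := mul_right_cancel₀ hga (neg_inj.mp h')
    rcases hjm.lt_or_gt with hlt | hlt
    · exact haux j m hlt (by omega) hjm'
    · exact haux m j hlt (by omega) hjm'.symm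
  · intro h
    have h' : -(g ^ j * (g + 1)) = -(-(g ^ m * (g + 1))) :=
      hdiv _ _ (by rw [h, ← neg_div])
    have hjm' : g ^ j = g ^ (t + m) := by
      have h2 : g ^ j * (g + 1) = -(g ^ m) * (g + 1) := by linear_combination -h'
      have h3 : g ^ j = -(g ^ m) := mul_right_cancel₀ hga h2
      rw [pow_add, hneg, h3]; ring
    exact haux j (t + m) (by omega) (by omega) hjm'
end

section
/- For all n ≥ 2 and each edge type x with 1 ≤ x ≤ ⌊n/2⌋, there exist two paths Q_x and Q_x' in K_n such that every x-type edge of K_n lies in Q_x ∪ Q_x', and every edge of Q_x ∪ Q_x' has type 1 or type x. -/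
open SimpleGraph Finset

lemma walk_of_seq {V : Type*} (g : ℕ → V) :
    ∀ M : ℕ, 1 ≤ M → (∀ i, i + 1 < M → g i ≠ g (i + 1)) →
    ∃ w : (⊤ : SimpleGraph V).Walk (g 0) (g (M - 1)),
      w.support = (List.range M).map g ∧
      w.edges = (List.range (M - 1)).map (fun i => s(g i, g (i + 1))) := by
  intro M
  induction M with
  | zero => omega
  | succ M ih =>
    intro _ hadj
    rcases Nat.eq_zero_or_pos M with hM | hM
    · subst hM
      exact ⟨SimpleGraph.Walk.nil, by simp [List.range_succ], by simp⟩
    · obtain ⟨w, hs, he⟩ := ih hM (fun i hi => hadj i (by omega))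
      have hadj' : (⊤ : SimpleGraph V).Adj (g (M - 1)) (g M) := by
        have := hadj (M - 1) (by omega)
        rw [show M - 1 + 1 = M by omega] at this
        simpa using this
      refine ⟨w.concat hadj', ?_, ?_⟩
      · rw [SimpleGraph.Walk.support_concat, hs, List.range_succ]
        simp
      · rw [SimpleGraph.Walk.edges_concat, he, Nat.add_sub_cancel,
          show List.range M = List.range (M - 1 + 1) by rw [Nat.sub_add_cancel hM],
          List.range_succ]
        simp [show M - 1 + 1 = M by omega]

lemma isPathEdgeSet_of_seq {V : Type*} [DecidableEq V] (g : ℕ → V) (N : ℕ) (hN : 1 ≤ N)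
    (hg : ∀ i j, i < N → j < N → g i = g j → i = j) :
    IsPathEdgeSet (⊤ : SimpleGraph V)
      ((List.range (N - 1)).map (fun i => s(g i, g (i + 1)))).toFinset := by
  obtain ⟨w, hs, he⟩ := walk_of_seq g N hN
    (fun i hi h => by have := hg i (i + 1) (by omega) hi h; omega)
  refine ⟨_, _, w, SimpleGraph.Walk.IsPath.mk' ?_, by rw [he]⟩
  rw [hs]
  exact List.Nodup.map_on
    (fun a ha b hb hab => hg a b (List.mem_range.mp ha) (List.mem_range.mp hb) hab)
    List.nodup_range

/-- For each type `x` there are two paths covering all `x`-type edges of `K_n`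
using only edges of types `1` and `x`. -/
theorem stmt11 (n x : ℕ) (hn : 2 ≤ n) (hx1 : 1 ≤ x) (hx2 : x ≤ n / 2) :
    ∃ Q Q' : Finset (Sym2 (ZMod n)),
      IsPathEdgeSet (⊤ : SimpleGraph (ZMod n)) Q ∧
      IsPathEdgeSet (⊤ : SimpleGraph (ZMod n)) Q' ∧
      (∀ e : Sym2 (ZMod n), edgeType n e = x → e ∈ Q ∪ Q') ∧
      (∀ e ∈ Q ∪ Q', edgeType n e = 1 ∨ edgeType n e = x) := by
  haveI : NeZero n := ⟨by omega⟩
  have h2x : 2 * x ≤ n := by omega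
  set d := Nat.gcd n x with hd
  have hdn : d ∣ n := Nat.gcd_dvd_left n x
  have hdx : d ∣ x := Nat.gcd_dvd_right n x
  have hd0 : 0 < d := Nat.gcd_pos_of_pos_left x (by omega)
  have hdlex : d ≤ x := Nat.le_of_dvd (by omega) hdx
  obtain ⟨m, hnm⟩ := hdn   -- n = d * m
  have hmd : m * d = n := by rw [hnm, Nat.mul_comm]
  have hm2 : 2 ≤ m := by
    rcases m with _ | _ | m
    · rw [Nat.mul_zero] at hnm; omega
    · rw [Nat.mul_one] at hnm; omega
    · omega
  have hm0 : 0 < m := by omega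
  have hnd : n / d = m := by rw [hnm]; exact Nat.mul_div_cancel_left m hd0
  -- the vertex function
  set f : ℕ → ℕ → ZMod n :=
    fun j k => (j : ZMod n) * (1 - (x : ZMod n)) + (k : ZMod n) * (x : ZMod n) with hf
  have hmx : (m : ZMod n) * (x : ZMod n) = 0 := by
    have h0 : ((m * x : ℕ) : ZMod n) = 0 := by
      rw [ZMod.natCast_eq_zero_iff]
      obtain ⟨c, hc⟩ := hdx
      exact ⟨c, by rw [hc, ← Nat.mul_assoc, hmd]⟩
    push_cast at h0; exact h0
  have hstep : ∀ j k : ℕ, f j (k + 1) = f j k + (x : ZMod n) := by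
    intro j k; simp only [hf]; push_cast; ring
  have hm1cast : ((m - 1 : ℕ) : ZMod n) = (m : ZMod n) - 1 := by
    rw [Nat.cast_sub (by omega), Nat.cast_one]
  have hwrap : ∀ j : ℕ, f j 0 = f j (m - 1) + (x : ZMod n) := by
    intro j; simp only [hf, hm1cast]; push_cast; linear_combination -hmx
  have hblock : ∀ j : ℕ, f (j + 1) 0 = f j (m - 1) + 1 := by
    intro j; simp only [hf, hm1cast]; push_cast; linear_combination -hmx
  -- injectivity of f
  have hfinj : ∀ j k j' k', j < d → k < m → j' < d → k' < m → f j k = f j' k' →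
      j = j' ∧ k = k' := by
    intro j k j' k' hj hk hj' hk' hEq
    have hxd : ((x : ℕ) : ZMod d) = 0 := by
      rw [ZMod.natCast_eq_zero_iff]; exact hdx
    have h2 := congrArg (ZMod.castHom ⟨m, hnm⟩ (ZMod d)) hEq
    simp only [hf, map_add, map_mul, map_sub, map_one, map_natCast, hxd, mul_zero, add_zero,
      sub_zero, mul_one] at h2
    have hjj : j = j' := by
      have h3 := (ZMod.natCast_eq_natCast_iff' j j' d).mp h2
      rwa [Nat.mod_eq_of_lt hj, Nat.mod_eq_of_lt hj'] at h3
    subst hjj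
    refine ⟨rfl, ?_⟩
    have h4 : (k : ZMod n) * (x : ZMod n) = (k' : ZMod n) * (x : ZMod n) := by
      simp only [hf] at hEq
      exact add_left_cancel hEq
    have h5 : k * x ≡ k' * x [MOD n] := by
      rw [← ZMod.natCast_eq_natCast_iff]; push_cast; exact h4
    have h6 := Nat.ModEq.cancel_right_div_gcd (show 0 < n by omega) h5
    rw [← hd, hnd] at h6
    rwa [Nat.ModEq, Nat.mod_eq_of_lt hk, Nat.mod_eq_of_lt hk'] at h6
  -- surjectivity
  have hsurj : ∀ v : ZMod n, ∃ j k, j < d ∧ k < m ∧ v = f j k := by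
    have hbij : Function.Bijective (fun p : Fin d × Fin m => f p.1 p.2) := by
      rw [Fintype.bijective_iff_injective_and_card]
      constructor
      · rintro ⟨j, k⟩ ⟨j', k'⟩ hEq
        obtain ⟨h1, h2⟩ := hfinj _ _ _ _ j.isLt k.isLt j'.isLt k'.isLt hEq
        simp only [Prod.mk.injEq, Fin.ext_iff]
        exact ⟨h1, h2⟩
      · rw [Fintype.card_prod, Fintype.card_fin, Fintype.card_fin, ZMod.card, Nat.mul_comm]
        exact hmd
    intro v
    obtain ⟨⟨j, k⟩, hp⟩ := hbij.2 v
    exact ⟨j, k, j.isLt, k.isLt, hp.symm⟩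
  -- edge types
  have htype : ∀ (y : ℕ) (v : ZMod n), 1 ≤ y → 2 * y ≤ n →
      edgeType n s(v, v + (y : ZMod n)) = y := by
    intro y v h1 h2
    have hyval : ((y : ZMod n)).val = y := ZMod.val_cast_of_lt (by omega)
    have hy0 : (y : ZMod n) ≠ 0 := by
      intro h; rw [h, ZMod.val_zero] at hyval; omega
    simp only [edgeType, Sym2.lift_mk]
    unfold cdist
    rw [show v - (v + (y : ZMod n)) = -(y : ZMod n) by ring,
      show (v + (y : ZMod n)) - v = (y : ZMod n) by ring,
      ZMod.neg_val, if_neg hy0, hyval]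
    omega
  have hrep : ∀ e : Sym2 (ZMod n), edgeType n e = x →
      ∃ v : ZMod n, e = s(v, v + (x : ZMod n)) := by
    intro e he
    induction e using Sym2.ind with
    | _ a b =>
      simp only [edgeType, Sym2.lift_mk] at he
      unfold cdist at he
      have hxval : ((x : ZMod n)).val = x := ZMod.val_cast_of_lt (by omega)
      rcases le_total ((a - b).val) ((b - a).val) with h | h
      · rw [min_eq_left h] at he
        have : a - b = (x : ZMod n) := ZMod.val_injective n (by rw [he, hxval])
        refine ⟨b, ?_⟩
        rw [show a = b + (x : ZMod n) by rw [← this]; ring]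
        exact Sym2.eq_swap.symm ▸ rfl
      · rw [min_eq_right h] at he
        have : b - a = (x : ZMod n) := ZMod.val_injective n (by rw [he, hxval])
        refine ⟨a, ?_⟩
        rw [show b = a + (x : ZMod n) by rw [← this]; ring]
  -- the two sequences
  set gQ : ℕ → ZMod n := fun i => f (i / m) (i % m) with hgQdef
  set gQ' : ℕ → ZMod n := fun i => f (i / 2) (if i % 2 = 0 then 0 else m - 1) with hgQ'def
  have hgQ : ∀ j k, k < m → gQ (k + m * j) = f j k := by
    intro j k hk
    simp only [hgQdef]
    rw [Nat.add_mul_div_left _ _ hm0, Nat.add_mul_mod_self_left,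
      Nat.div_eq_of_lt hk, Nat.mod_eq_of_lt hk, Nat.zero_add]
  have hgQ'0 : ∀ j, gQ' (2 * j) = f j 0 := by
    intro j; simp only [hgQ'def]
    rw [show 2 * j / 2 = j by omega, show 2 * j % 2 = 0 by omega]
    simp
  have hgQ'1 : ∀ j, gQ' (2 * j + 1) = f j (m - 1) := by
    intro j; simp only [hgQ'def]
    rw [show (2 * j + 1) / 2 = j by omega, show (2 * j + 1) % 2 = 1 by omega]
    simp
  have hgQinj : ∀ i i', i < n → i' < n → gQ i = gQ i' → i = i' := by
    intro i i' hi hi' hEq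
    have him : i / m < d := by
      rw [Nat.div_lt_iff_lt_mul hm0]
      exact lt_of_lt_of_le hi (le_of_eq hnm)
    have him' : i' / m < d := by
      rw [Nat.div_lt_iff_lt_mul hm0]
      exact lt_of_lt_of_le hi' (le_of_eq hnm)
    obtain ⟨h1, h2⟩ := hfinj _ _ _ _ him (Nat.mod_lt _ hm0) him' (Nat.mod_lt _ hm0) hEq
    calc i = i % m + m * (i / m) := (Nat.mod_add_div i m).symm
      _ = i' % m + m * (i' / m) := by rw [h1, h2]
      _ = i' := Nat.mod_add_div i' m
  have hgQ'inj : ∀ i i', i < 2 * d → i' < 2 * d → gQ' i = gQ' i' → i = i' := by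
    intro i i' hi hi' hEq
    simp only [hgQ'def] at hEq
    have hklt : ∀ a : ℕ, (if a % 2 = 0 then 0 else m - 1) < m := by intro a; split <;> omega
    obtain ⟨e1, e2⟩ := hfinj _ _ _ _ (by omega : i / 2 < d) (hklt i) (by omega : i' / 2 < d)
      (hklt i') hEq
    rcases Nat.mod_two_eq_zero_or_one i with hi2 | hi2 <;>
      rcases Nat.mod_two_eq_zero_or_one i' with hi2' | hi2' <;>
      rw [hi2, hi2'] at e2 <;> simp only [if_pos, if_neg, one_ne_zero, reduceIte] at e2 <;>
      omega
  -- the two path edge sets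
  refine ⟨((List.range (n - 1)).map (fun i => s(gQ i, gQ (i + 1)))).toFinset,
          ((List.range (2 * d - 1)).map (fun i => s(gQ' i, gQ' (i + 1)))).toFinset,
          isPathEdgeSet_of_seq gQ n (by omega) hgQinj,
          isPathEdgeSet_of_seq gQ' (2 * d) (by omega) hgQ'inj, ?_, ?_⟩
  · -- coverage
    intro e he
    obtain ⟨v, rfl⟩ := hrep e he
    obtain ⟨j, k, hj, hk, rfl⟩ := hsurj v
    rw [Finset.mem_union]
    by_cases hkm : k + 1 < m
    · left
      rw [List.mem_toFinset, List.mem_map]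
      refine ⟨k + m * j, List.mem_range.mpr ?_, ?_⟩
      · have h8 : m * (j + 1) ≤ m * d := Nat.mul_le_mul (le_refl m) hj
        have h9 : m * (j + 1) = m * j + m := by ring
        omega
      · rw [show k + m * j + 1 = (k + 1) + m * j by omega, hgQ j k (by omega),
          hgQ j (k + 1) hkm, hstep]
    · right
      have hkm1 : k = m - 1 := by omega
      subst hkm1
      rw [List.mem_toFinset, List.mem_map]
      refine ⟨2 * j, List.mem_range.mpr (by omega), ?_⟩
      rw [hgQ'0 j, hgQ'1 j, hwrap j]
      exact Sym2.eq_swap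
  · -- types
    intro e he
    rw [Finset.mem_union] at he
    rcases he with he | he
    · rw [List.mem_toFinset, List.mem_map] at he
      obtain ⟨i, hi, rfl⟩ := he
      rw [List.mem_range] at hi
      obtain ⟨k, j, hk, rfl⟩ : ∃ k j, k < m ∧ i = k + m * j :=
        ⟨i % m, i / m, Nat.mod_lt _ hm0, (Nat.mod_add_div i m).symm⟩
      by_cases hc : k + 1 < m
      · right
        rw [show k + m * j + 1 = (k + 1) + m * j by omega, hgQ j k hk, hgQ j (k + 1) hc, hstep]
        exact htype x _ hx1 h2x
      · left
        have h9 : m * (j + 1) = m * j + m := by ring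
        rw [show k + m * j + 1 = 0 + m * (j + 1) by omega, hgQ j k hk, hgQ (j + 1) 0 (by omega),
          show k = m - 1 by omega, hblock]
        have h10 := htype 1 (f j (m - 1)) le_rfl (by omega)
        rwa [Nat.cast_one] at h10
    · rw [List.mem_toFinset, List.mem_map] at he
      obtain ⟨i, hi, rfl⟩ := he
      rw [List.mem_range] at hi
      rcases Nat.even_or_odd i with ⟨j, hj⟩ | ⟨j, hj⟩
      · right
        rw [show i = 2 * j by omega, hgQ'0 j, hgQ'1 j, hwrap j, Sym2.eq_swap]
        exact htype x _ hx1 h2x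
      · left
        rw [show i = 2 * j + 1 by omega, show 2 * j + 1 + 1 = 2 * (j + 1) by ring,
          hgQ'1 j, hgQ'0 (j + 1), hblock j]
        have h10 := htype 1 (f j (m - 1)) le_rfl (by omega)
        rwa [Nat.cast_one] at h10
end

section
/- For n ≡ 3 or 5 (mod 6) with n ≥ 13, the edge set L = M_0 ∪ R ∪ B defined in the paper's construction is a linear forest in K_n: every vertex has degree at most 2 in L and L contains no cycle. -/
open SimpleGraph Finset

/-- The matching `M_0 = {(-i, i) : i ∈ [(n-1)/2]}`. -/
def M0 (n : ℕ) : Finset (Sym2 (ZMod n)) :=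
  (Finset.Icc 1 ((n - 1) / 2)).image fun i : ℕ => s(-(i : ZMod n), (i : ZMod n))

def R1 (n : ℕ) : Finset (Sym2 (ZMod n)) :=
  {s((1 : ZMod n), -(((n - 3) / 2 : ℕ) : ZMod n)),
   s((-1 : ZMod n), -(((n - 1) / 2 : ℕ) : ZMod n))}

def rPar (n : ℕ) : ℕ := if Odd ((n - 1) / 2) then (n - 7) / 4 else (n - 9) / 4

def R2 (n : ℕ) : Finset (Sym2 (ZMod n)) :=
  (Finset.range (rPar n)).image fun k =>
    s(-(((3 + 2 * k : ℕ) : ZMod n)), (((n - 1) / 2 - k : ℕ) : ZMod n))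

/-- `i_b`: the largest even `i` with `2i + 3 ≤ (n-1)/4`. -/
def ib (n : ℕ) : ℕ := 2 * ((((n - 1) / 4) - 3) / 4)

def xb (n : ℕ) : ℕ := 2 * ib n + 3

def tPar (n : ℕ) : ℕ := (xb n + 1) / 2

def Bset (n : ℕ) : Finset (Sym2 (ZMod n)) :=
  (Finset.range (tPar n)).image fun k =>
    s((((2 * k : ℕ) : ZMod n) - (((xb n - 3) / 2 : ℕ) : ZMod n)),
      ((((xb n + 3) / 2 + k : ℕ) : ZMod n)))

/-- The linear forest `L = M_0 ∪ R ∪ B`. -/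
def Lforest (n : ℕ) : Finset (Sym2 (ZMod n)) := M0 n ∪ R1 n ∪ R2 n ∪ Bset n


/-! ### Auxiliary machinery: a potential-function criterion for acyclicity -/

section Machinery

variable {V : Type*} [DecidableEq V]

private lemma list_sum_map_add {α : Type*} (l : List α) (f g : α → ℤ) :
    (l.map (fun x => f x + g x)).sum = (l.map f).sum + (l.map g).sum := by
  induction l with
  | nil => simp
  | cons a l ih => simp [ih]; ring

private lemma list_sum_pos (l : List ℤ) (h0 : ∀ x ∈ l, 0 ≤ x) (h1 : ∃ x ∈ l, 0 < x) :
    0 < l.sum := by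
  induction l with
  | nil => simp at h1
  | cons a l ih =>
    rcases h1 with ⟨x, hx, hxpos⟩
    rcases List.mem_cons.mp hx with rfl | hx
    · have : 0 ≤ l.sum := List.sum_nonneg (fun y hy => h0 y (List.mem_cons_of_mem _ hy))
      simp only [List.sum_cons]
      omega
    · have ha : 0 ≤ a := h0 a List.mem_cons_self
      have := ih (fun y hy => h0 y (List.mem_cons_of_mem _ hy)) ⟨x, hx, hxpos⟩
      simp only [List.sum_cons]
      omega

/-- In a cycle, every support vertex has two distinct neighbours whose edges lie on the
cycle. -/
private lemma cycle_two_neighbors {G : SimpleGraph V} {v : V} {c : G.Walk v v}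
    (hc : c.IsCycle) {x : V} (hx : x ∈ c.support) :
    ∃ b1 b2, b1 ≠ b2 ∧ G.Adj x b1 ∧ G.Adj x b2 ∧ b1 ∈ c.support ∧ b2 ∈ c.support ∧
      s(x, b1) ∈ c.edges ∧ s(x, b2) ∈ c.edges := by
  classical
  set c' : G.Walk x x := c.rotate x hx with hc'def
  have hc' : c'.IsCycle := hc.rotate hx
  have hlen3 : 3 ≤ c'.length := hc'.three_le_length
  have hnil : ¬ c'.Nil := by
    rw [SimpleGraph.Walk.nil_iff_length_eq]; omega
  have hnilr : ¬ c'.reverse.Nil := by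
    rw [SimpleGraph.Walk.nil_iff_length_eq, SimpleGraph.Walk.length_reverse]; omega
  set b1 := c'.getVert 1 with hb1
  set b2 := c'.reverse.getVert 1 with hb2
  have adj1 : G.Adj x b1 := c'.adj_snd hnil
  have adj2 : G.Adj x b2 := c'.reverse.adj_snd hnilr
  have he1 : c'.edges = s(x, b1) :: c'.tail.edges := by
    conv_lhs => rw [← c'.cons_tail_eq hnil]
    simp
    exact Or.inl rfl
  have he2 : c'.reverse.edges = s(x, b2) :: c'.reverse.tail.edges := by
    conv_lhs => rw [← c'.reverse.cons_tail_eq hnilr]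
    simp
    exact Or.inl (SimpleGraph.Walk.snd_reverse c').symm
  have he1mem : s(x, b1) ∈ c'.edges := by rw [he1]; exact List.mem_cons_self
  have he2mem : s(x, b2) ∈ c'.edges := by
    have : s(x, b2) ∈ c'.reverse.edges := by rw [he2]; exact List.mem_cons_self
    rwa [SimpleGraph.Walk.edges_reverse, List.mem_reverse] at this
  have hb12 : b1 ≠ b2 := by
    intro hEq
    have hnodup : c'.edges.Nodup := hc'.isTrail.edges_nodup
    have hrev : c'.edges = (c'.reverse.tail.edges).reverse ++ [s(x, b2)] := by
      have := congrArg List.reverse he2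
      rwa [SimpleGraph.Walk.edges_reverse, List.reverse_reverse, List.reverse_cons] at this
    have hlenE : c'.edges.length = c'.length := SimpleGraph.Walk.length_edges c'
    have htne : c'.tail.edges ≠ [] := by
      intro h
      have h1 : c'.edges.length = 1 := by rw [he1, h]; rfl
      omega
    have key : s(x, b2) ∈ c'.tail.edges := by
      rcases hY : (c'.reverse.tail.edges).reverse with _ | ⟨y, Y'⟩
      · rw [hY] at hrev
        rw [he1] at hrev
        simp at hrev
        exact absurd hrev.2 (by rw [he1]; exact htne)
      · rw [hY] at hrev
        rw [he1] at hrev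
        simp only [List.cons_append] at hrev
        have := (List.cons_eq_cons.mp hrev).2
        rw [this]
        exact List.mem_append_right _ (List.mem_singleton_self _)
    rw [he1] at hnodup
    have : s(x, b1) ∉ c'.tail.edges := (List.nodup_cons.mp hnodup).1
    rw [hEq] at this
    exact this key
  have hsupp : ∀ y, G.Adj x y → y ∈ c'.support → y ∈ c.support := by
    intro y hadj hy
    have : y ∈ c'.support.tail := by
      have := SimpleGraph.Walk.support_eq_cons c'
      rw [this] at hy
      rcases List.mem_cons.mp hy with hy | hy
      · exact absurd hy hadj.ne'
      · exact hy
    have hrot := SimpleGraph.Walk.support_rotate c x hx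
    have : y ∈ c.support.tail := hrot.mem_iff.mp this
    exact List.mem_of_mem_tail this
  have hb1s : b1 ∈ c.support := hsupp b1 adj1
    (SimpleGraph.Walk.snd_mem_support_of_mem_edges c' he1mem)
  have hb2s : b2 ∈ c.support := hsupp b2 adj2
    (SimpleGraph.Walk.snd_mem_support_of_mem_edges c' he2mem)
  have hrotE := SimpleGraph.Walk.rotate_edges c x hx
  exact ⟨b1, b2, hb12, adj1, adj2, hb1s, hb2s,
    hrotE.mem_iff.mp he1mem, hrotE.mem_iff.mp he2mem⟩

/-- Acyclicity from an odd potential positive on all non-matching edges. -/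
private lemma acyclic_of_potential {n : ℕ} (L : Finset (Sym2 (ZMod n)))
    (G : SimpleGraph (ZMod n))
    (hGadj : ∀ x y : ZMod n, G.Adj x y → s(x, y) ∈ L)
    (η : ZMod n → ℤ)
    (hodd : ∀ v : ZMod n, η (-v) = -η v)
    (hedge : ∀ x y : ZMod n, s(x, y) ∈ L → x ≠ y → y = -x ∨ 0 < η x + η y)
    (hRB : ∀ x y z : ZMod n, s(x, y) ∈ L → s(x, z) ∈ L → x ≠ y → x ≠ z →
      y ≠ -x → z ≠ -x → y = z) :
    G.IsAcyclic := by
  classical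
  intro v c hc
  have adjL : ∀ {x y : ZMod n}, G.Adj x y → s(x, y) ∈ L := fun h => hGadj _ _ h
  have hneg : ∀ x ∈ c.support, -x ∈ c.support := by
    intro x hx
    obtain ⟨b1, b2, h12, a1, a2, s1, s2, -, -⟩ := cycle_two_neighbors hc hx
    by_cases hb1 : b1 = -x
    · rwa [← hb1]
    by_cases hb2 : b2 = -x
    · rwa [← hb2]
    exact absurd (hRB x b1 b2 (adjL a1) (adjL a2) a1.ne a2.ne hb1 hb2) h12
  set msum := (c.darts.map (fun d => η d.toProd.1 + η d.toProd.2)).sum with hmsum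
  have heta0 : η 0 = 0 := by
    have := hodd 0
    rw [neg_zero] at this
    omega
  have hpos : 0 < msum := by
    apply list_sum_pos
    · intro z hz
      rcases List.mem_map.mp hz with ⟨d, hd, rfl⟩
      have hadj : G.Adj d.toProd.1 d.toProd.2 := d.adj
      rcases hedge _ _ (adjL hadj) hadj.ne with h | h
      · rw [h, hodd]; omega
      · omega
    · have hvs : v ∈ c.support := SimpleGraph.Walk.start_mem_support c
      obtain ⟨b1, b2, h12, a1, a2, s1, s2, e1, e2⟩ := cycle_two_neighbors hc hvs
      have hex : ∃ b, G.Adj v b ∧ b ≠ -v ∧ s(v, b) ∈ c.edges := by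
        by_cases hb1 : b1 = -v
        · exact ⟨b2, a2, fun h => h12 (hb1.trans h.symm), e2⟩
        · exact ⟨b1, a1, hb1, e1⟩
      obtain ⟨b, hab, hbne, hbe⟩ := hex
      have hsum : 0 < η v + η b := by
        rcases hedge _ _ (adjL hab) hab.ne with h | h
        · exact absurd h hbne
        · exact h
      have hbe' : s(v, b) ∈ c.darts.map SimpleGraph.Dart.edge := by
        rwa [SimpleGraph.Walk.edges] at hbe
      rcases List.mem_map.mp hbe' with ⟨d, hd, hde⟩
      refine ⟨η d.toProd.1 + η d.toProd.2, List.mem_map.mpr ⟨d, hd, rfl⟩, ?_⟩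
      have hcases : d.toProd.1 = v ∧ d.toProd.2 = b ∨ d.toProd.1 = b ∧ d.toProd.2 = v := by
        rw [SimpleGraph.Dart.edge] at hde
        exact Sym2.eq_iff.mp hde
      rcases hcases with ⟨h1, h2⟩ | ⟨h1, h2⟩ <;> rw [h1, h2] <;> omega
  -- common facts about the closed walk support
  have hsup : c.support = v :: c.support.tail := SimpleGraph.Walk.support_eq_cons c
  have hlen : 3 ≤ c.length := hc.three_le_length
  have hlens : c.support.length = c.length + 1 := SimpleGraph.Walk.length_support c
  have htne : c.support.tail ≠ [] := by
    intro h
    have h1 : c.support.length = 1 := by rw [hsup, h]; rfl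
    omega
  have hlast : c.support.tail.getLast htne = v := by
    rw [List.getLast_tail]
    exact SimpleGraph.Walk.getLast_support c
  have hA : msum = 2 * ((c.support.tail.map η).sum) := by
    rw [hmsum]
    rw [show (fun d : G.Dart => η d.toProd.1 + η d.toProd.2)
        = (fun d : G.Dart => (η ∘ (·.toProd.1)) d + (η ∘ (·.toProd.2)) d) from rfl]
    rw [list_sum_map_add]
    have h1 : c.darts.map (η ∘ (·.toProd.1)) = (c.support.dropLast).map η := by
      rw [← SimpleGraph.Walk.map_fst_darts, List.map_map]
    have h2 : c.darts.map (η ∘ (·.toProd.2)) = (c.support.tail).map η := by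
      rw [← SimpleGraph.Walk.map_snd_darts, List.map_map]
    rw [h1, h2]
    have hd : c.support.dropLast = v :: c.support.tail.dropLast := by
      conv_lhs => rw [hsup]
      exact List.dropLast_cons_of_ne_nil htne
    have ht : c.support.tail = c.support.tail.dropLast ++ [v] := by
      conv_lhs => rw [← List.dropLast_append_getLast htne, hlast]
    rw [hd]
    conv_lhs => rw [ht]
    conv_rhs => rw [ht]
    simp [List.sum_append]
    ring
  have hC : ((c.support.tail.map η).sum) = 0 := by
    have hnd : c.support.tail.Nodup := hc.2
    rw [← List.sum_toFinset η hnd]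
    have hmem : ∀ a : ZMod n, a ∈ c.support.tail.toFinset → -a ∈ c.support.tail.toFinset := by
      intro a ha
      rw [List.mem_toFinset] at ha ⊢
      have has : a ∈ c.support := List.mem_of_mem_tail ha
      have hnas : -a ∈ c.support := hneg a has
      rw [hsup] at hnas
      rcases List.mem_cons.mp hnas with h | h
      · have hv := List.getLast_mem htne
        rw [hlast] at hv
        rwa [h]
      · exact h
    refine Finset.sum_involution (fun a _ => -a) ?_ ?_ hmem ?_
    · intro a _
      rw [hodd]; ring
    · intro a _ hfa h
      apply hfa
      have h' : -a = a := h
      have h2 : η (-a) = -η a := hodd a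
      rw [h'] at h2
      omega
    · intro a _
      simp
  rw [hA, hC] at hpos
  omega

end Machinery

/-! ### The potential function and combinatorial facts about `L` -/

section Arith

/-- midpoint parameter -/
private def mP (n : ℕ) : ℕ := (n - 1) / 2

/-- magnitude `|3w - (n+2)|` -/
private def gg (n w : ℕ) : ℕ := if 3 * w ≤ n + 2 then n + 2 - 3 * w else 3 * w - (n + 2)

/-- the dyadic boost condition -/
private def chi (n w : ℕ) : Prop :=
  ∃ s c : ℕ, 1 ≤ s ∧ c % 2 = 1 ∧ ib n + 3 ≤ c ∧ c ≤ 2 * ib n + 4 ∧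
    2 ^ s * gg n w = gg n c

open scoped Classical in
/-- the potential on magnitudes -/
private noncomputable def FF (n : ℕ) : ℕ → ℤ := fun w =>
  if n = 15 then [0, -3, 0, 1, 1, -5, -4, 2].getD w 0
  else if n = 17 then [0, -3, 0, 1, 1, -5, 0, -4, 2].getD w 0
  else if w = 0 then 0
  else if w = 1 then (if ib n = 2 then 6 else -(((n - 15) / 2 : ℕ) : ℤ))
  else if mP n - rPar n + 1 ≤ w then
    (if chi n w then (((n - 7) / 2 : ℕ) : ℤ) + 2 else 0) - (gg n w : ℤ)
  else if ib n + 3 ≤ w ∧ w ≤ 2 * ib n + 4 then 1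
  else if w % 2 = 1 then -(n : ℤ)
  else 0

/-- the odd potential on `ZMod n` -/
private noncomputable def eta (n : ℕ) : ZMod n → ℤ := fun v =>
  if v.val ≤ (n - 1) / 2 then FF n v.val else -FF n (n - v.val)

private lemma FF_zero (n : ℕ) : FF n 0 = 0 := by
  unfold FF
  rcases eq_or_ne n 15 with h | h
  · simp [h]
  rcases eq_or_ne n 17 with h' | h'
  · simp [h, h']
  simp [h, h']

private lemma cast_inj' {n a b : ℕ} (ha : a < n) (hb : b < n)
    (h : (a : ZMod n) = (b : ZMod n)) : a = b := by
  have := congrArg ZMod.val h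
  rwa [ZMod.val_cast_of_lt ha, ZMod.val_cast_of_lt hb] at this

private lemma neg_cast' {n a : ℕ} (hn : 0 < n) (ha : a ≤ n) :
    -((a : ℕ) : ZMod n) = ((n - a : ℕ) : ZMod n) := by
  have h : ((a : ℕ) : ZMod n) + ((n - a : ℕ) : ZMod n) = 0 := by
    rw [← Nat.cast_add]
    have : a + (n - a) = n := by omega
    rw [this, ZMod.natCast_self]
  exact neg_eq_of_add_eq_zero_right h

private lemma eta_cast {n a : ℕ} (ha : a < n) :
    eta n ((a : ℕ) : ZMod n) = if a ≤ (n - 1) / 2 then FF n a else -FF n (n - a) := by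
  unfold eta
  rw [ZMod.val_cast_of_lt ha]

private lemma eta_odd {n : ℕ} [NeZero n] (hn : 13 ≤ n) (h2n : n % 2 = 1) (v : ZMod n) :
    eta n (-v) = -eta n v := by
  by_cases h0 : v = 0
  · subst h0
    rw [neg_zero]
    unfold eta
    simp [ZMod.val_zero, FF_zero]
  · have hval : (-v).val = n - v.val := by
      rw [ZMod.neg_val]
      simp [h0]
    have hvlt : v.val < n := ZMod.val_lt v
    have hv1 : 0 < v.val := ZMod.val_pos.mpr h0
    unfold eta
    rw [hval]
    by_cases hle : v.val ≤ (n - 1) / 2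
    · have h1 : ¬ (n - v.val ≤ (n - 1) / 2) := by omega
      rw [if_neg h1, if_pos hle]
      have h2 : n - (n - v.val) = v.val := by omega
      rw [h2]
    · have h1 : n - v.val ≤ (n - 1) / 2 := by omega
      rw [if_pos h1, if_neg hle, neg_neg]

private lemma mem_Lforest {n : ℕ} {e : Sym2 (ZMod n)} :
    e ∈ Lforest n ↔ e ∈ M0 n ∨ e ∈ (R1 n ∪ R2 n ∪ Bset n) := by
  simp [Lforest, Finset.mem_union, or_assoc]

private lemma M0_neg {n : ℕ} {x y : ZMod n} (h : s(x, y) ∈ M0 n) : y = -x := by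
  unfold M0 at h
  rcases Finset.mem_image.mp h with ⟨i, -, hi⟩
  rcases Sym2.eq_iff.mp hi.symm with ⟨h1, h2⟩ | ⟨h1, h2⟩
  · rw [h2, h1, neg_neg]
  · rw [h2, h1]

/-- canonical shapes of the edges of `R ∪ B` -/
private def Shape (n a b : ℕ) : Prop :=
  (a = 1 ∧ b = (n + 3) / 2) ∨
  (a = n - 1 ∧ b = (n + 1) / 2) ∨
  (∃ k, k < rPar n ∧ a = n - 3 - 2 * k ∧ b = (n - 1) / 2 - k) ∨
  (∃ k, k < ib n + 2 ∧ b = ib n + 3 + k ∧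
    ((ib n ≤ 2 * k ∧ a = 2 * k - ib n) ∨ (2 * k < ib n ∧ a = n - (ib n - 2 * k))))

private lemma xb_facts (n : ℕ) (hn : 13 ≤ n) :
    (xb n - 3) / 2 = ib n ∧ (xb n + 3) / 2 = ib n + 3 ∧ tPar n = ib n + 2
      ∧ 2 * ib n + 4 < (n - 1) / 2 ∧ ib n + 13 ≤ n := by
  have h1 : xb n = 2 * ib n + 3 := rfl
  have h2 : ib n = 2 * (((n - 1) / 4 - 3) / 4) := rfl
  unfold tPar
  omega

private lemma RB_shape {n : ℕ} {e : Sym2 (ZMod n)} (hn : 13 ≤ n) (h2n : n % 2 = 1)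
    (he : e ∈ R1 n ∪ R2 n ∪ Bset n) :
    ∃ a b : ℕ, a < n ∧ b < n ∧ e = s(((a : ℕ) : ZMod n), ((b : ℕ) : ZMod n)) ∧ Shape n a b := by
  have hn0 : 0 < n := by omega
  obtain ⟨hx1, hx2, hx3, hx4, hx5⟩ := xb_facts n hn
  rcases Finset.mem_union.mp he with he | he
  · rcases Finset.mem_union.mp he with he | he
    · -- R1
      unfold R1 at he
      rcases Finset.mem_insert.mp he with he | he
      · refine ⟨1, (n + 3) / 2, by omega, by omega, ?_, Or.inl ⟨rfl, rfl⟩⟩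
        have hneg : -((((n - 3) / 2 : ℕ)) : ZMod n) = ((((n + 3) / 2 : ℕ)) : ZMod n) := by
          rw [neg_cast' hn0 (by omega)]
          congr 1
          omega
        rw [he, hneg]
        norm_num
      · rw [Finset.mem_singleton] at he
        refine ⟨n - 1, (n + 1) / 2, by omega, by omega, ?_, Or.inr (Or.inl ⟨rfl, rfl⟩)⟩
        have hneg1 : ((-1 : ZMod n)) = (((n - 1 : ℕ)) : ZMod n) := by
          rw [show ((-1 : ZMod n)) = -((1 : ℕ) : ZMod n) by norm_num,
            neg_cast' hn0 (by omega)]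
        have hneg2 : -((((n - 1) / 2 : ℕ)) : ZMod n) = ((((n + 1) / 2 : ℕ)) : ZMod n) := by
          rw [neg_cast' hn0 (by omega)]
          congr 1
          omega
        rw [he, hneg1, hneg2]
    · -- R2
      unfold R2 at he
      rcases Finset.mem_image.mp he with ⟨k, hk, hke⟩
      rw [Finset.mem_range] at hk
      have hrb : rPar n ≤ (n - 7) / 4 := by
        unfold rPar
        split <;> omega
      refine ⟨n - 3 - 2 * k, (n - 1) / 2 - k, by omega, by omega, ?_,
        Or.inr (Or.inr (Or.inl ⟨k, hk, rfl, rfl⟩))⟩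
      have hneg : -(((3 + 2 * k : ℕ)) : ZMod n) = (((n - 3 - 2 * k : ℕ)) : ZMod n) := by
        rw [neg_cast' hn0 (by omega)]
        congr 1
        omega
      rw [← hke, hneg]
  · -- B
    unfold Bset at he
    rcases Finset.mem_image.mp he with ⟨k, hk, hke⟩
    rw [Finset.mem_range, hx3] at hk
    rw [hx1, hx2] at hke
    by_cases h2k : ib n ≤ 2 * k
    · refine ⟨2 * k - ib n, ib n + 3 + k, by omega, by omega, ?_,
        Or.inr (Or.inr (Or.inr ⟨k, hk, rfl, Or.inl ⟨h2k, rfl⟩⟩))⟩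
      have h5 : ((2 * k : ℕ) : ZMod n) - ((ib n : ℕ) : ZMod n)
          = (((2 * k - ib n : ℕ)) : ZMod n) := by
        rw [Nat.cast_sub h2k]
      rw [← hke, h5]
    · refine ⟨n - (ib n - 2 * k), ib n + 3 + k, by omega, by omega, ?_,
        Or.inr (Or.inr (Or.inr ⟨k, hk, rfl, Or.inr ⟨by omega, rfl⟩⟩))⟩
      have h5 : ((2 * k : ℕ) : ZMod n) - ((ib n : ℕ) : ZMod n)
          = (((n - (ib n - 2 * k) : ℕ)) : ZMod n) := by
        rw [← neg_cast' hn0 (by omega : ib n - 2 * k ≤ n)]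
        rw [Nat.cast_sub (by omega : 2 * k ≤ ib n), neg_sub]
      rw [← hke, h5]

/-- canonical shape, purely arithmetic version -/
private def ShS (n m i r a b : ℕ) : Prop :=
  (a = 1 ∧ b = m + 2) ∨
  (a = n - 1 ∧ b = m + 1) ∨
  (∃ k, k < r ∧ a = n - 3 - 2 * k ∧ b = m - k) ∨
  (∃ k, k < i + 2 ∧ b = i + 3 + k ∧
    ((i ≤ 2 * k ∧ a = 2 * k - i) ∨ (2 * k < i ∧ a = n - (i - 2 * k))))

private lemma shape_core {n m i r a b a' b' : ℕ}
    (hn : 13 ≤ n) (hm : n = 2 * m + 1) (hie : i % 2 = 0) (hi8 : 8 * i + 13 ≤ n)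
    (hr : (m % 2 = 1 ∧ 2 * r = m - 3) ∨ (m % 2 = 0 ∧ 2 * r = m - 4))
    (h1 : ShS n m i r a b) (h2 : ShS n m i r a' b')
    (hcom : a = a' ∨ a = b' ∨ b = a' ∨ b = b') : a = a' ∧ b = b' := by
  rcases hr with ⟨hr1, hr2⟩ | ⟨hr1, hr2⟩ <;>
  rcases h1 with ⟨rfl, rfl⟩ | ⟨rfl, rfl⟩ | ⟨k, hk, rfl, rfl⟩ |
    ⟨k, hk, rfl, (⟨hik, rfl⟩ | ⟨hik, rfl⟩)⟩ <;>
  rcases h2 with ⟨rfl, rfl⟩ | ⟨rfl, rfl⟩ | ⟨k', hk', rfl, rfl⟩ |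
    ⟨k', hk', rfl, (⟨hik', rfl⟩ | ⟨hik', rfl⟩)⟩ <;>
  rcases hcom with h | h | h | h <;>
  omega

/-- distinct shapes never share a vertex -/
private lemma Shape_eq {n a b a' b' : ℕ} (hn : 13 ≤ n) (hmod : n % 6 = 3 ∨ n % 6 = 5)
    (h1 : Shape n a b) (h2 : Shape n a' b')
    (hcom : a = a' ∨ a = b' ∨ b = a' ∨ b = b') : a = a' ∧ b = b' := by
  have h2n : n % 2 = 1 := by omega
  have hi : ib n = 2 * (((n - 1) / 4 - 3) / 4) := rfl
  have hie : ib n % 2 = 0 := by omega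
  have hi8 : 8 * ib n + 13 ≤ n := by omega
  have hm : n = 2 * ((n - 1) / 2) + 1 := by omega
  have hr : ((n - 1) / 2 % 2 = 1 ∧ 2 * rPar n = (n - 1) / 2 - 3) ∨
      ((n - 1) / 2 % 2 = 0 ∧ 2 * rPar n = (n - 1) / 2 - 4) := by
    unfold rPar
    by_cases h : Odd ((n - 1) / 2)
    · have := Nat.odd_iff.mp h
      rw [if_pos h]
      left
      omega
    · have := Nat.not_odd_iff.mp h
      rw [if_neg h]
      right
      omega
  have conv : ∀ x y : ℕ, Shape n x y → ShS n ((n - 1) / 2) (ib n) (rPar n) x y := by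
    intro x y hxy
    rcases hxy with ⟨rfl, rfl⟩ | ⟨rfl, rfl⟩ | ⟨k, hk, rfl, rfl⟩ | ⟨k, hk, rfl, hor⟩
    · exact Or.inl ⟨rfl, by omega⟩
    · exact Or.inr (Or.inl ⟨rfl, by omega⟩)
    · exact Or.inr (Or.inr (Or.inl ⟨k, hk, rfl, by omega⟩))
    · exact Or.inr (Or.inr (Or.inr ⟨k, hk, rfl, hor⟩))
  exact shape_core hn hm hie hi8 hr (conv a b h1) (conv a' b' h2) hcom


private lemma rP2 (n : ℕ) (hn : 13 ≤ n) :
    ((n - 1) / 2 % 2 = 1 ∧ 2 * rPar n = (n - 1) / 2 - 3) ∨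
    ((n - 1) / 2 % 2 = 0 ∧ 2 * rPar n = (n - 1) / 2 - 4) := by
  unfold rPar
  by_cases h : Odd ((n - 1) / 2)
  · have := Nat.odd_iff.mp h
    rw [if_pos h]
    left
    omega
  · have := Nat.not_odd_iff.mp h
    rw [if_neg h]
    right
    omega

private lemma ib_facts (n : ℕ) : ib n = 2 * (((n - 1) / 4 - 3) / 4) := rfl

private lemma gg_double {n k : ℕ} (h2n : n % 2 = 1) (hk : 2 * k + 13 ≤ n) :
    gg n (3 + 2 * k) = 2 * gg n (mP n - k) := by
  unfold gg mP
  split <;> split <;> omega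

private lemma chi_step {n l w : ℕ} (h : gg n l = 2 * gg n w) (hc : chi n l) : chi n w := by
  obtain ⟨s, c, hs, h1, h2, h3, h4⟩ := hc
  refine ⟨s + 1, c, by omega, h1, h2, h3, ?_⟩
  have h5 : 2 ^ (s + 1) * gg n w = 2 ^ s * (2 * gg n w) := by ring
  rw [h5, ← h, h4]

private lemma chi_intro {n w c : ℕ} (h : gg n c = 2 * gg n w) (hodd : c % 2 = 1)
    (h1 : ib n + 3 ≤ c) (h2 : c ≤ 2 * ib n + 4) : chi n w := by
  refine ⟨1, c, le_refl 1, hodd, h1, h2, ?_⟩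
  rw [pow_one, ← h]

private lemma gg_mP {n : ℕ} (hn : 13 ≤ n) (h2n : n % 2 = 1) :
    gg n (mP n) = (n - 7) / 2 := by
  unfold gg mP
  split <;> omega

private lemma gg_mP1 {n : ℕ} (hn : 13 ≤ n) (h2n : n % 2 = 1) :
    gg n (mP n - 1) = (n - 13) / 2 := by
  unfold gg mP
  split <;> omega

private lemma gg_block {n c : ℕ} (hn : 13 ≤ n) (hc : c ≤ 2 * ib n + 4)
    (hi8 : 8 * ib n + 13 ≤ n) : gg n c = n + 2 - 3 * c := by
  unfold gg
  split <;> omega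

private lemma two_pow_ge {s : ℕ} (h : 2 ≤ s) : 4 ≤ 2 ^ s := by
  calc (4 : ℕ) = 2 ^ 2 := rfl
  _ ≤ 2 ^ s := Nat.pow_le_pow_right (by norm_num) h

private lemma chi_m_true {n : ℕ} (hn : 21 ≤ n) (h2n : n % 2 = 1) (hi0 : ib n = 0) :
    chi n (mP n) := by
  refine chi_intro (c := 3) ?_ (by norm_num) (by omega) (by omega)
  rw [gg_mP (by omega) h2n, gg_block (by omega) (by omega) (by omega)]
  omega

private lemma chi_m_false {n : ℕ} (hn : 21 ≤ n) (h2n : n % 2 = 1) (hi2 : 2 ≤ ib n)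
    (hi8 : 8 * ib n + 13 ≤ n) : ¬ chi n (mP n) := by
  rintro ⟨s, c, hs, hodd, hc1, hc2, heq⟩
  rw [gg_mP (by omega) h2n, gg_block (by omega) hc2 hi8] at heq
  rcases (by omega : s = 1 ∨ 2 ≤ s) with rfl | hs2
  · rw [pow_one] at heq
    omega
  · have h4 : 4 ≤ 2 ^ s := two_pow_ge hs2
    have h5 : 4 * ((n - 7) / 2) ≤ 2 ^ s * ((n - 7) / 2) :=
      Nat.mul_le_mul_right _ h4
    omega

private lemma chi_m1_true {n : ℕ} (hn : 21 ≤ n) (h2n : n % 2 = 1) (hi2 : ib n = 2) :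
    chi n (mP n - 1) := by
  have hib := ib_facts n
  refine chi_intro (c := 5) ?_ (by norm_num) (by omega) (by omega)
  rw [gg_mP1 (by omega) h2n, gg_block (by omega) (by omega) (by omega)]
  omega

private lemma chi_m1_false {n : ℕ} (hn : 21 ≤ n) (h2n : n % 2 = 1) (hi2 : ib n ≠ 2)
    (hie : ib n % 2 = 0) (hi8 : 8 * ib n + 13 ≤ n) : ¬ chi n (mP n - 1) := by
  rintro ⟨s, c, hs, hodd, hc1, hc2, heq⟩
  rw [gg_mP1 (by omega) h2n, gg_block (by omega) hc2 hi8] at heq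
  rcases (by omega : s = 1 ∨ 2 ≤ s) with rfl | hs2
  · rw [pow_one] at heq
    omega
  · have h4 : 4 ≤ 2 ^ s := two_pow_ge hs2
    have h5 : 4 * ((n - 13) / 2) ≤ 2 ^ s * ((n - 13) / 2) :=
      Nat.mul_le_mul_right _ h4
    omega

private lemma FF_eval_one {n : ℕ} (h15 : n ≠ 15) (h17 : n ≠ 17) :
    FF n 1 = (if ib n = 2 then (6 : ℤ) else -(((n - 15) / 2 : ℕ) : ℤ)) := by
  unfold FF
  rw [if_neg h15, if_neg h17, if_neg (by norm_num : (1 : ℕ) ≠ 0), if_pos rfl]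

private lemma FF_eval_high_pos {n w : ℕ} (h15 : n ≠ 15) (h17 : n ≠ 17)
    (h0 : w ≠ 0) (h1 : w ≠ 1) (hh : mP n - rPar n + 1 ≤ w) (hc : chi n w) :
    FF n w = (((n - 7) / 2 : ℕ) : ℤ) + 2 - (gg n w : ℤ) := by
  unfold FF
  rw [if_neg h15, if_neg h17, if_neg h0, if_neg h1, if_pos hh, if_pos hc]

private lemma FF_eval_high_neg {n w : ℕ} (h15 : n ≠ 15) (h17 : n ≠ 17)
    (h0 : w ≠ 0) (h1 : w ≠ 1) (hh : mP n - rPar n + 1 ≤ w) (hc : ¬ chi n w) :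
    FF n w = -(gg n w : ℤ) := by
  unfold FF
  rw [if_neg h15, if_neg h17, if_neg h0, if_neg h1, if_pos hh, if_neg hc]
  ring

private lemma FF_eval_block {n w : ℕ} (h15 : n ≠ 15) (h17 : n ≠ 17)
    (h0 : w ≠ 0) (h1 : w ≠ 1) (hh : ¬ (mP n - rPar n + 1 ≤ w))
    (hb : ib n + 3 ≤ w ∧ w ≤ 2 * ib n + 4) : FF n w = 1 := by
  unfold FF
  rw [if_neg h15, if_neg h17, if_neg h0, if_neg h1, if_neg hh, if_pos hb]

private lemma FF_eval_odd {n w : ℕ} (h15 : n ≠ 15) (h17 : n ≠ 17)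
    (h0 : w ≠ 0) (h1 : w ≠ 1) (hh : ¬ (mP n - rPar n + 1 ≤ w))
    (hb : ¬ (ib n + 3 ≤ w ∧ w ≤ 2 * ib n + 4)) (ho : w % 2 = 1) :
    FF n w = -(n : ℤ) := by
  unfold FF
  rw [if_neg h15, if_neg h17, if_neg h0, if_neg h1, if_neg hh, if_neg hb, if_pos ho]

private lemma FF_eval_even {n w : ℕ} (h15 : n ≠ 15) (h17 : n ≠ 17)
    (h1 : w ≠ 1) (hh : ¬ (mP n - rPar n + 1 ≤ w))
    (hb : ¬ (ib n + 3 ≤ w ∧ w ≤ 2 * ib n + 4)) (ho : w % 2 = 0) :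
    FF n w = 0 := by
  unfold FF
  rw [if_neg h15, if_neg h17]
  by_cases h0 : w = 0
  · rw [if_pos h0]
  · rw [if_neg h0, if_neg h1, if_neg hh, if_neg hb, if_neg (by omega : ¬ w % 2 = 1)]

/-- table evaluation -/
private lemma FF15 (w : ℕ) : FF 15 w = [0, -3, 0, 1, 1, -5, -4, 2].getD w 0 := by
  unfold FF
  rw [if_pos rfl]

private lemma FF17 (w : ℕ) : FF 17 w = [0, -3, 0, 1, 1, -5, 0, -4, 2].getD w 0 := by
  unfold FF
  rw [if_neg (by norm_num), if_pos rfl]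

/-- the main positivity estimates for `FF` -/
private lemma FF_E1 {n : ℕ} (hn : 13 ≤ n) (hmod : n % 6 = 3 ∨ n % 6 = 5) :
    FF n (mP n - 1) < FF n 1 := by
  have h2n : n % 2 = 1 := by omega
  by_cases h15 : n = 15
  · subst h15
    rw [show mP 15 - 1 = 6 from rfl, FF15, FF15]
    decide
  by_cases h17 : n = 17
  · subst h17
    rw [show mP 17 - 1 = 7 from rfl, FF17, FF17]
    decide
  have hn21 : 21 ≤ n := by omega
  have hib := ib_facts n
  have hie : ib n % 2 = 0 := by omega
  have hi8 : 8 * ib n + 13 ≤ n := by omega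
  have hr := rP2 n hn
  have hm1 : mP n - 1 ≠ 0 ∧ mP n - 1 ≠ 1 := by unfold mP; omega
  have hhigh : mP n - rPar n + 1 ≤ mP n - 1 := by
    rcases hr with ⟨h, h'⟩ | ⟨h, h'⟩ <;> unfold mP at * <;> omega
  rw [FF_eval_one h15 h17]
  by_cases hi2 : ib n = 2
  · rw [if_pos hi2,
      FF_eval_high_pos h15 h17 hm1.1 hm1.2 hhigh (chi_m1_true hn21 h2n hi2),
      gg_mP1 (by omega) h2n]
    omega
  · rw [if_neg hi2,
      FF_eval_high_neg h15 h17 hm1.1 hm1.2 hhigh (chi_m1_false hn21 h2n hi2 hie hi8),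
      gg_mP1 (by omega) h2n]
    omega

private lemma FF_E2 {n : ℕ} (hn : 13 ≤ n) (hmod : n % 6 = 3 ∨ n % 6 = 5) :
    FF n 1 + FF n (mP n) < 0 := by
  have h2n : n % 2 = 1 := by omega
  by_cases h15 : n = 15
  · subst h15
    rw [show mP 15 = 7 from rfl, FF15, FF15]
    decide
  by_cases h17 : n = 17
  · subst h17
    rw [show mP 17 = 8 from rfl, FF17, FF17]
    decide
  have hn21 : 21 ≤ n := by omega
  have hib := ib_facts n
  have hie : ib n % 2 = 0 := by omega
  have hi8 : 8 * ib n + 13 ≤ n := by omega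
  have hr := rP2 n hn
  have hm0 : mP n ≠ 0 ∧ mP n ≠ 1 := by unfold mP; omega
  have hhigh : mP n - rPar n + 1 ≤ mP n := by
    rcases hr with ⟨h, h'⟩ | ⟨h, h'⟩ <;> unfold mP at * <;> omega
  rw [FF_eval_one h15 h17]
  by_cases hi0 : ib n = 0
  · rw [FF_eval_high_pos h15 h17 hm0.1 hm0.2 hhigh (chi_m_true hn21 h2n hi0),
      gg_mP (by omega) h2n, if_neg (by omega : ¬ ib n = 2)]
    omega
  · rw [FF_eval_high_neg h15 h17 hm0.1 hm0.2 hhigh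
        (chi_m_false hn21 h2n (by omega) hi8),
      gg_mP (by omega) h2n]
    by_cases hi2 : ib n = 2
    · rw [if_pos hi2]
      omega
    · rw [if_neg hi2]
      omega

private lemma FF_E3 {n : ℕ} (hn : 13 ≤ n) (hmod : n % 6 = 3 ∨ n % 6 = 5)
    {k : ℕ} (hk : k < rPar n) : FF n (3 + 2 * k) < FF n (mP n - k) := by
  have h2n : n % 2 = 1 := by omega
  by_cases h15 : n = 15
  · subst h15
    have hr15 : rPar 15 = 2 := by
      unfold rPar
      rw [if_pos (by decide : Odd ((15 - 1) / 2))]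
    rw [hr15] at hk
    interval_cases k
    · rw [show mP 15 - 0 = 7 from rfl, show 3 + 2 * 0 = 3 from rfl, FF15, FF15]
      decide
    · rw [show mP 15 - 1 = 6 from rfl, show 3 + 2 * 1 = 5 from rfl, FF15, FF15]
      decide
  by_cases h17 : n = 17
  · subst h17
    have hr17 : rPar 17 = 2 := by
      unfold rPar
      rw [if_neg (by decide : ¬ Odd ((17 - 1) / 2))]
    rw [hr17] at hk
    interval_cases k
    · rw [show mP 17 - 0 = 8 from rfl, show 3 + 2 * 0 = 3 from rfl, FF17, FF17]
      decide
    · rw [show mP 17 - 1 = 7 from rfl, show 3 + 2 * 1 = 5 from rfl, FF17, FF17]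
      decide
  have hn21 : 21 ≤ n := by omega
  have hib := ib_facts n
  have hie : ib n % 2 = 0 := by omega
  have hi8 : 8 * ib n + 13 ≤ n := by omega
  have hr := rP2 n hn
  have hkb : 2 * k + 13 ≤ n := by
    rcases hr with ⟨h, h'⟩ | ⟨h, h'⟩ <;> unfold mP at * <;> omega
  have hgd : gg n (3 + 2 * k) = 2 * gg n (mP n - k) := gg_double h2n hkb
  have hw0 : mP n - k ≠ 0 ∧ mP n - k ≠ 1 ∧ mP n - rPar n + 1 ≤ mP n - k := by
    rcases hr with ⟨h, h'⟩ | ⟨h, h'⟩ <;> unfold mP at * <;> omega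
  have hggw : 0 < gg n (mP n - k) ∧ gg n (mP n - k) ≤ (n - 7) / 2 := by
    unfold gg mP
    split <;> (rcases hr with ⟨h, h'⟩ | ⟨h, h'⟩ <;> unfold mP at * <;> omega)
  by_cases hlh : mP n - rPar n + 1 ≤ 3 + 2 * k
  · by_cases hcl : chi n (3 + 2 * k)
    · have hcw : chi n (mP n - k) := chi_step hgd hcl
      rw [FF_eval_high_pos h15 h17 (by omega) (by omega) hlh hcl,
        FF_eval_high_pos h15 h17 hw0.1 hw0.2.1 hw0.2.2 hcw]
      omega
    · rw [FF_eval_high_neg h15 h17 (by omega) (by omega) hlh hcl]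
      by_cases hcw : chi n (mP n - k)
      · rw [FF_eval_high_pos h15 h17 hw0.1 hw0.2.1 hw0.2.2 hcw]
        omega
      · rw [FF_eval_high_neg h15 h17 hw0.1 hw0.2.1 hw0.2.2 hcw]
        omega
  · by_cases hbl : ib n + 3 ≤ 3 + 2 * k ∧ 3 + 2 * k ≤ 2 * ib n + 4
    · have hcw : chi n (mP n - k) := chi_intro hgd (by omega) hbl.1 hbl.2
      rw [FF_eval_block h15 h17 (by omega) (by omega) hlh hbl,
        FF_eval_high_pos h15 h17 hw0.1 hw0.2.1 hw0.2.2 hcw]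
      omega
    · rw [FF_eval_odd h15 h17 (by omega) (by omega) hlh hbl (by omega)]
      by_cases hcw : chi n (mP n - k)
      · rw [FF_eval_high_pos h15 h17 hw0.1 hw0.2.1 hw0.2.2 hcw]
        omega
      · rw [FF_eval_high_neg h15 h17 hw0.1 hw0.2.1 hw0.2.2 hcw]
        omega

private lemma FF_E4a {n : ℕ} (hn : 13 ≤ n) (hmod : n % 6 = 3 ∨ n % 6 = 5)
    {k : ℕ} (hk : k < ib n + 2) (h : ib n ≤ 2 * k) :
    0 < FF n (2 * k - ib n) + FF n (ib n + 3 + k) := by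
  have h2n : n % 2 = 1 := by omega
  by_cases h15 : n = 15
  · subst h15
    have hib0 : ib 15 = 0 := rfl
    rw [hib0] at hk h ⊢
    interval_cases k
    · rw [show 2 * 0 - 0 = 0 from rfl, show 0 + 3 + 0 = 3 from rfl, FF15, FF15]
      decide
    · rw [show 2 * 1 - 0 = 2 from rfl, show 0 + 3 + 1 = 4 from rfl, FF15, FF15]
      decide
  by_cases h17 : n = 17
  · subst h17
    have hib0 : ib 17 = 0 := rfl
    rw [hib0] at hk h ⊢
    interval_cases k
    · rw [show 2 * 0 - 0 = 0 from rfl, show 0 + 3 + 0 = 3 from rfl, FF17, FF17]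
      decide
    · rw [show 2 * 1 - 0 = 2 from rfl, show 0 + 3 + 1 = 4 from rfl, FF17, FF17]
      decide
  have hn21 : 21 ≤ n := by omega
  have hib := ib_facts n
  have hie : ib n % 2 = 0 := by omega
  have hi8 : 8 * ib n + 13 ≤ n := by omega
  have hr := rP2 n hn
  have hnb : ¬ (mP n - rPar n + 1 ≤ ib n + 3 + k) := by
    rcases hr with ⟨hh, h'⟩ | ⟨hh, h'⟩ <;> unfold mP at * <;> omega
  rw [FF_eval_block h15 h17 (by omega) (by omega) hnb ⟨by omega, by omega⟩]
  by_cases hw0 : 2 * k - ib n = 0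
  · rw [hw0, FF_zero]
    norm_num
  · have hnb2 : ¬ (mP n - rPar n + 1 ≤ 2 * k - ib n) := by
      rcases hr with ⟨hh, h'⟩ | ⟨hh, h'⟩ <;> unfold mP at * <;> omega
    rw [FF_eval_even h15 h17 (by omega) hnb2 (by omega) (by omega)]
    norm_num

private lemma FF_E4b {n : ℕ} (hn : 13 ≤ n) (hmod : n % 6 = 3 ∨ n % 6 = 5)
    {k : ℕ} (hk : k < ib n + 2) (h : 2 * k < ib n) :
    FF n (ib n - 2 * k) < FF n (ib n + 3 + k) := by
  have h2n : n % 2 = 1 := by omega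
  by_cases h15 : n = 15
  · subst h15
    have hib0 : ib 15 = 0 := rfl
    rw [hib0] at h
    omega
  by_cases h17 : n = 17
  · subst h17
    have hib0 : ib 17 = 0 := rfl
    rw [hib0] at h
    omega
  have hn21 : 21 ≤ n := by omega
  have hib := ib_facts n
  have hie : ib n % 2 = 0 := by omega
  have hi8 : 8 * ib n + 13 ≤ n := by omega
  have hr := rP2 n hn
  have hnb : ¬ (mP n - rPar n + 1 ≤ ib n + 3 + k) := by
    rcases hr with ⟨hh, h'⟩ | ⟨hh, h'⟩ <;> unfold mP at * <;> omega
  rw [FF_eval_block h15 h17 (by omega) (by omega) hnb ⟨by omega, by omega⟩]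
  have hnb2 : ¬ (mP n - rPar n + 1 ≤ ib n - 2 * k) := by
    rcases hr with ⟨hh, h'⟩ | ⟨hh, h'⟩ <;> unfold mP at * <;> omega
  rw [FF_eval_even h15 h17 (by omega) hnb2 (by omega) (by omega)]
  norm_num

/-- positivity of `eta` sums over `R ∪ B` edges -/
private lemma RB_pos {n : ℕ} (hn : 13 ≤ n) (hmod : n % 6 = 3 ∨ n % 6 = 5)
    {x y : ZMod n} (h : s(x, y) ∈ R1 n ∪ R2 n ∪ Bset n) : 0 < eta n x + eta n y := by
  obtain ⟨a, b, ha, hb, he, hs⟩ := RB_shape hn (by omega) h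
  have hsum : eta n x + eta n y = eta n ((a : ℕ) : ZMod n) + eta n ((b : ℕ) : ZMod n) := by
    rcases Sym2.eq_iff.mp he with ⟨h1, h2⟩ | ⟨h1, h2⟩
    · rw [h1, h2]
    · rw [h1, h2]; ring
  rw [hsum, eta_cast ha, eta_cast hb]
  obtain ⟨hx1, hx2, hx3, hx4, hx5⟩ := xb_facts n hn
  have hrb : rPar n ≤ (n - 7) / 4 ∧ (n - 9) / 4 ≤ rPar n := by
    unfold rPar; split <;> omega
  rcases hs with ⟨rfl, rfl⟩ | ⟨rfl, rfl⟩ | ⟨k, hk, rfl, rfl⟩ | ⟨k, hk, rfl, hab⟩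
  · -- {1, -(m-1)} : η = F 1 - F(m-1)
    have e1 : (1 : ℕ) ≤ (n - 1) / 2 := by omega
    have e2 : ¬ ((n + 3) / 2 ≤ (n - 1) / 2) := by omega
    rw [if_pos e1, if_neg e2]
    have : n - (n + 3) / 2 = mP n - 1 := by unfold mP; omega
    rw [this]
    have := FF_E1 hn hmod
    omega
  · -- {-1, -m} : η = -F 1 - F m
    have e1 : ¬ (n - 1 ≤ (n - 1) / 2) := by omega
    have e2 : ¬ ((n + 1) / 2 ≤ (n - 1) / 2) := by omega
    rw [if_neg e1, if_neg e2]
    have h3 : n - (n - 1) = 1 := by omega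
    have h4 : n - (n + 1) / 2 = mP n := by unfold mP; omega
    rw [h3, h4]
    have := FF_E2 hn hmod
    omega
  · -- R2 edge
    have e1 : ¬ (n - 3 - 2 * k ≤ (n - 1) / 2) := by omega
    have e2 : (n - 1) / 2 - k ≤ (n - 1) / 2 := by omega
    rw [if_neg e1, if_pos e2]
    have h3 : n - (n - 3 - 2 * k) = 3 + 2 * k := by omega
    rw [h3]
    have := FF_E3 hn hmod hk
    unfold mP at this
    omega
  · rcases hab with ⟨hik, rfl⟩ | ⟨hik, rfl⟩
    · -- B edge, nonnegative first coordinate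
      have e1 : 2 * k - ib n ≤ (n - 1) / 2 := by omega
      have e2 : ib n + 3 + k ≤ (n - 1) / 2 := by omega
      rw [if_pos e1, if_pos e2]
      exact FF_E4a hn hmod hk hik
    · -- B edge, negative first coordinate
      have e1 : ¬ (n - (ib n - 2 * k) ≤ (n - 1) / 2) := by omega
      have e2 : ib n + 3 + k ≤ (n - 1) / 2 := by omega
      rw [if_neg e1, if_pos e2]
      have h3 : n - (n - (ib n - 2 * k)) = ib n - 2 * k := by omega
      rw [h3]
      have := FF_E4b hn hmod hk hik
      omega

/-- each vertex lies in at most one edge of `R ∪ B` -/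
private lemma RB_unique {n : ℕ} (hn : 13 ≤ n) (hmod : n % 6 = 3 ∨ n % 6 = 5)
    {x y z : ZMod n} (hy : s(x, y) ∈ R1 n ∪ R2 n ∪ Bset n)
    (hz : s(x, z) ∈ R1 n ∪ R2 n ∪ Bset n) (hxy : x ≠ y) (hxz : x ≠ z) : y = z := by
  obtain ⟨a, b, ha, hb, he, hs⟩ := RB_shape hn (by omega) hy
  obtain ⟨a', b', ha', hb', he', hs'⟩ := RB_shape hn (by omega) hz
  rcases Sym2.eq_iff.mp he with ⟨h1, h2⟩ | ⟨h1, h2⟩ <;>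
    rcases Sym2.eq_iff.mp he' with ⟨h3, h4⟩ | ⟨h3, h4⟩
  · have hco : a = a' := cast_inj' ha ha' (by rw [← h1, ← h3])
    obtain ⟨-, hbb⟩ := Shape_eq hn hmod hs hs' (Or.inl hco)
    rw [h2, h4, hbb]
  · have hco : a = b' := cast_inj' ha hb' (by rw [← h1, ← h3])
    obtain ⟨haa, hbb⟩ := Shape_eq hn hmod hs hs' (Or.inr (Or.inl hco))
    exfalso
    apply hxy
    rw [h1, h2]
    have hab : a = b := by omega
    rw [hab]
  · have hco : b = a' := cast_inj' hb ha' (by rw [← h1, ← h3])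
    obtain ⟨haa, hbb⟩ := Shape_eq hn hmod hs hs' (Or.inr (Or.inr (Or.inl hco)))
    exfalso
    apply hxy
    rw [h1, h2]
    have hab : b = a := by omega
    rw [hab]
  · have hco : b = b' := cast_inj' hb hb' (by rw [← h1, ← h3])
    obtain ⟨haa, -⟩ := Shape_eq hn hmod hs hs' (Or.inr (Or.inr (Or.inr hco)))
    rw [h2, h4, haa]

end Arith

/-- `L = M_0 ∪ R ∪ B` is a linear forest: acyclic with maximum degree at most 2. -/
theorem stmt15 (n : ℕ) (hn : 13 ≤ n) (hmod : n % 6 = 3 ∨ n % 6 = 5) :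
    (SimpleGraph.fromEdgeSet (↑(Lforest n) : Set (Sym2 (ZMod n)))).IsAcyclic ∧
    ∀ v : ZMod n,
      ((SimpleGraph.fromEdgeSet (↑(Lforest n) : Set (Sym2 (ZMod n)))).neighborSet v).ncard
        ≤ 2 := by
  classical
  haveI : NeZero n := ⟨by omega⟩
  set G := SimpleGraph.fromEdgeSet (↑(Lforest n) : Set (Sym2 (ZMod n))) with hGdef
  have hGadj : ∀ x y : ZMod n, G.Adj x y ↔ s(x, y) ∈ Lforest n ∧ x ≠ y := by
    intro x y
    rw [hGdef, SimpleGraph.fromEdgeSet_adj]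
    simp
  constructor
  · apply acyclic_of_potential (Lforest n) G (fun x y h => ((hGadj x y).mp h).1) (eta n)
    · exact fun v => eta_odd (by omega) (by omega) v
    · intro x y hmem _
      rcases mem_Lforest.mp hmem with h | h
      · exact Or.inl (M0_neg h)
      · exact Or.inr (RB_pos hn hmod h)
    · intro x y z hy hz hxy hxz hyne hzne
      have hy' : s(x, y) ∈ R1 n ∪ R2 n ∪ Bset n := by
        rcases mem_Lforest.mp hy with h | h
        · exact absurd (M0_neg h) hyne
        · exact h
      have hz' : s(x, z) ∈ R1 n ∪ R2 n ∪ Bset n := by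
        rcases mem_Lforest.mp hz with h | h
        · exact absurd (M0_neg h) hzne
        · exact h
      exact RB_unique hn hmod hy' hz' hxy hxz
  · intro v
    by_cases hex : ∃ u : ZMod n, s(v, u) ∈ R1 n ∪ R2 n ∪ Bset n ∧ u ≠ v
    · obtain ⟨p, hp, hpv⟩ := hex
      have hsub : G.neighborSet v ⊆ {-v, p} := by
        intro u hu
        have hadj : G.Adj v u := hu
        rw [hGadj] at hadj
        obtain ⟨hmem, hne⟩ := hadj
        rcases mem_Lforest.mp hmem with h | h
        · have := M0_neg h
          left
          exact this
        · have : u = p := RB_unique hn hmod h hp hne (fun h' => hpv h'.symm)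
          right
          exact this
      calc (G.neighborSet v).ncard ≤ ({-v, p} : Set (ZMod n)).ncard :=
            Set.ncard_le_ncard hsub (Set.toFinite _)
        _ ≤ 2 := by
            refine le_trans (Set.ncard_insert_le _ _) ?_
            simp [Set.ncard_singleton]
    · have hsub : G.neighborSet v ⊆ {-v} := by
        intro u hu
        have hadj : G.Adj v u := hu
        rw [hGadj] at hadj
        obtain ⟨hmem, hne⟩ := hadj
        rcases mem_Lforest.mp hmem with h | h
        · exact M0_neg h
        · exact absurd ⟨u, h, fun h' => hne h'.symm⟩ hex
      calc (G.neighborSet v).ncard ≤ ({-v} : Set (ZMod n)).ncard :=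
            Set.ncard_le_ncard hsub (Set.toFinite _)
        _ ≤ 2 := by simp [Set.ncard_singleton]
end

section
/- Let p be an odd prime, g a primitive root mod p, and k = (p-1)/2. In the path P = (p, g, g+g^2, …, Σ_{i=1}^{p-2} g^i) on K_p, the first k edges have pairwise distinct types, the (k+i)-th edge has the same type as the i-th edge for 1 ≤ i ≤ k-2, and the k-th edge is the unique 1-type edge of P. Hence P contains exactly two edges of every type in [k] except type 1, which appears once. -/
open SimpleGraph Finset

lemma modHelper {n a b : ℕ} (hn : 0 < n) (hab : a ≤ b) (hb : b < a + 2 * n)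
    (h : a ≡ b [MOD n]) : b = a ∨ b = a + n := by
  obtain ⟨c, hc⟩ := Nat.modEq_iff_dvd.mp h
  have hc0 : 0 ≤ c := by
    by_contra hcn
    push_neg at hcn
    have h1 : c ≤ -1 := by omega
    have h2 : (n : ℤ) * c ≤ (n : ℤ) * (-1) :=
      mul_le_mul_of_nonneg_left h1 (by exact_mod_cast hn.le)
    rw [← hc] at h2
    omega
  have hc2 : c < 2 := by
    by_contra hcn
    push_neg at hcn
    have h2 : (n : ℤ) * 2 ≤ (n : ℤ) * c := mul_le_mul_of_nonneg_left hcn (by positivity)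
    rw [← hc] at h2
    omega
  interval_cases c <;> omega

/-- Types of the edges of the primitive-root path `P = (p, g, g+g², …)` in `K_p`:
the first `k` edges have pairwise distinct types, edge `k+i` repeats the type of
edge `i`, the `k`-th edge is the unique `1`-type edge, and every type in `[2,k]`
appears exactly twice while type `1` appears once. -/
theorem stmt19 (p : ℕ) (hp : p.Prime) (hodd : Odd p) (g : ZMod p)
    (hg : orderOf g = p - 1) :
    ∀ (vtx : ℕ → ZMod p), (vtx = fun m => ∑ j ∈ Finset.Icc 1 m, g ^ j) →
    ∀ (T : ℕ → ℕ), (T = fun i => edgeType p s(vtx (i - 1), vtx i)) →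
      (∀ i ∈ Finset.Icc 1 ((p - 1) / 2), ∀ j ∈ Finset.Icc 1 ((p - 1) / 2),
        i ≠ j → T i ≠ T j) ∧
      (∀ i ∈ Finset.Icc 1 ((p - 1) / 2 - 2), T ((p - 1) / 2 + i) = T i) ∧
      T ((p - 1) / 2) = 1 ∧
      (∀ x ∈ Finset.Icc 2 ((p - 1) / 2),
        typeCount p ((Finset.Icc 1 (p - 2)).image fun i => s(vtx (i - 1), vtx i)) x = 2) ∧
      typeCount p ((Finset.Icc 1 (p - 2)).image fun i => s(vtx (i - 1), vtx i)) 1 = 1 := by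
  intro vtx hv T hT
  haveI : Fact p.Prime := ⟨hp⟩
  set k := (p - 1) / 2 with hkdef
  have hp2 : p ≠ 2 := by rintro rfl; exact (by norm_num : ¬ Odd 2) hodd
  have hp3 : 3 ≤ p := by have := hp.two_le; omega
  have hpk : p = 2 * k + 1 := by obtain ⟨m, hm⟩ := hodd; omega
  have hk1 : 1 ≤ k := by omega
  have hord : orderOf g = 2 * k := by rw [hg]; omega
  have hgu : IsUnit g := by
    apply IsUnit.of_mul_eq_one (a := g) (g ^ (2 * k - 1))
    rw [← pow_succ']
    have h1 : 2 * k - 1 + 1 = 2 * k := by omega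
    rw [h1, ← hord, pow_orderOf_eq_one]
  have hgne : ∀ i : ℕ, g ^ i ≠ 0 := fun i => (hgu.pow i).ne_zero
  have hpowiff : ∀ m n : ℕ, g ^ m = g ^ n ↔ m ≡ n [MOD 2 * k] := by
    intro m n
    have hu : (hgu.unit : ZMod p) = g := hgu.unit_spec
    have hou : orderOf hgu.unit = 2 * k := by rw [← orderOf_units, hu, hord]
    rw [← hu, ← Units.val_pow_eq_pow_val, ← Units.val_pow_eq_pow_val, ← hou]
    exact ⟨fun h => pow_eq_pow_iff_modEq.mp (Units.ext h),
      fun h => congrArg _ (pow_eq_pow_iff_modEq.mpr h)⟩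
  have hgk : g ^ k = -1 := by
    have h2 : (g ^ k) ^ 2 = 1 := by
      rw [← pow_mul, show k * 2 = 2 * k by ring, ← hord, pow_orderOf_eq_one]
    rcases sq_eq_one_iff.mp h2 with h | h
    · exfalso
      have h1 : g ^ k = g ^ 0 := by simpa using h
      have h0 : k % (2 * k) = 0 := by
        simpa [Nat.ModEq] using (hpowiff k 0).mp h1
      rw [Nat.mod_eq_of_lt (by omega)] at h0
      omega
    · exact h
  have hv0 : vtx 0 = 0 := by rw [hv]; simp
  have hstep : ∀ n : ℕ, vtx (n + 1) = vtx n + g ^ (n + 1) := by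
    intro n; rw [hv]; exact Finset.sum_Icc_succ_top (by omega) _
  have hgeom : ∀ m : ℕ, (g - 1) * vtx m = g ^ (m + 1) - g := by
    intro m
    induction m with
    | zero => rw [hv0]; ring
    | succ n ih => rw [hstep n, mul_add, ih]; ring
  have hg1 : g ≠ 1 := by
    intro h; rw [h, orderOf_one] at hord; omega
  have hvinj : ∀ m m' : ℕ, m ≤ 2 * k - 1 → m' ≤ 2 * k - 1 → vtx m = vtx m' → m = m' := by
    intro m m' hm hm' h
    have hpow : g ^ (m + 1) = g ^ (m' + 1) := by
      have h1 : g ^ (m + 1) - g = g ^ (m' + 1) - g := by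
        rw [← hgeom, ← hgeom, h]
      have := sub_left_inj.mp h1
      exact this
    have hmod := (hpowiff _ _).mp hpow
    rcases le_total (m + 1) (m' + 1) with hle | hle
    · rcases modHelper (by omega) hle (by omega) hmod with h' | h' <;> omega
    · rcases modHelper (by omega) hle (by omega) hmod.symm with h' | h' <;> omega
  have hval : ∀ i : ℕ, 1 ≤ (g ^ i).val ∧ (g ^ i).val ≤ 2 * k := by
    intro i
    have h1 : 0 < (g ^ i).val := ZMod.val_pos.mpr (hgne i)
    have h2 : (g ^ i).val < p := ZMod.val_lt _
    omega
  have hTformula : ∀ i : ℕ, 1 ≤ i → T i = min (p - (g ^ i).val) ((g ^ i).val) := by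
    intro i hi
    obtain ⟨m, rfl⟩ : ∃ m, i = m + 1 := ⟨i - 1, by omega⟩
    simp only [hT, Nat.add_sub_cancel]
    rw [hstep m]
    simp only [edgeType, Sym2.lift_mk, cdist]
    have e1 : vtx m - (vtx m + g ^ (m + 1)) = -(g ^ (m + 1)) := by ring
    have e2 : vtx m + g ^ (m + 1) - vtx m = g ^ (m + 1) := by ring
    rw [e1, e2, ZMod.neg_val, if_neg (hgne _)]
  have hTstep : ∀ i : ℕ, 1 ≤ i → T (k + i) = T i := by
    intro i hi
    rw [hTformula _ (by omega), hTformula _ hi]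
    have h1 : g ^ (k + i) = -(g ^ i) := by rw [pow_add, hgk]; ring
    rw [h1, ZMod.neg_val, if_neg (hgne i)]
    have := hval i
    omega
  have hTk : T k = 1 := by
    rw [hTformula _ hk1, hgk]
    have h1 : (-1 : ZMod p).val = p - 1 := by
      rw [ZMod.neg_val, if_neg (one_ne_zero : (1 : ZMod p) ≠ 0), ZMod.val_one]
    rw [h1]
    omega
  have hTeq : ∀ i j : ℕ, 1 ≤ i → 1 ≤ j → T i = T j → i ≡ j [MOD k] := by
    intro i j hi hj h
    rw [hTformula _ hi, hTformula _ hj] at h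
    have hvi := hval i
    have hvj := hval j
    have hcase : (g ^ i).val = (g ^ j).val ∨ (g ^ i).val = p - (g ^ j).val := by omega
    rcases hcase with h' | h'
    · have hpow : g ^ i = g ^ j := ZMod.val_injective p h'
      exact ((hpowiff _ _).mp hpow).of_dvd (dvd_mul_left k 2)
    · have hval' : (g ^ i).val = (-(g ^ j)).val := by
        rw [ZMod.neg_val, if_neg (hgne j)]; omega
      have hpow : g ^ i = -(g ^ j) := ZMod.val_injective p hval'
      have hkj : g ^ i = g ^ (k + j) := by rw [pow_add, hgk, hpow]; ring
      have hm' : i ≡ k + j [MOD k] := ((hpowiff _ _).mp hkj).of_dvd (dvd_mul_left k 2)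
      exact hm'.trans (Nat.add_mod_left k j)
  have hTinj : ∀ i ∈ Finset.Icc 1 k, ∀ j ∈ Finset.Icc 1 k, i ≠ j → T i ≠ T j := by
    intro i hi j hj hij hTij
    simp only [Finset.mem_Icc] at hi hj
    have hm := hTeq i j hi.1 hj.1 hTij
    rcases le_total i j with h | h
    · rcases modHelper hk1 h (by omega) hm with h' | h' <;> omega
    · rcases modHelper hk1 h (by omega) hm.symm with h' | h' <;> omega
  have hTrange : ∀ i : ℕ, 1 ≤ i → 1 ≤ T i ∧ T i ≤ k := by
    intro i hi
    rw [hTformula _ hi]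
    have := hval i
    omega
  have himg : (Finset.Icc 1 k).image T = Finset.Icc 1 k := by
    apply Finset.eq_of_subset_of_card_le
    · intro x hx
      simp only [Finset.mem_image] at hx
      obtain ⟨i, hi, rfl⟩ := hx
      simp only [Finset.mem_Icc] at hi ⊢
      exact hTrange i hi.1
    · rw [Finset.card_image_of_injOn]
      intro a ha b hb hab
      by_contra h
      exact hTinj a ha b hb h hab
  have hE : ∀ x : ℕ, typeCount p ((Finset.Icc 1 (p - 2)).image fun i => s(vtx (i - 1), vtx i)) x
      = ((Finset.Icc 1 (p - 2)).filter fun i => T i = x).card := by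
    intro x
    unfold typeCount
    rw [Finset.filter_image, Finset.card_image_of_injOn]
    · congr 1
      apply Finset.filter_congr
      intro i _
      simp [hT]
    · intro a ha b hb hab
      simp only [Finset.coe_filter, Set.mem_setOf_eq, Finset.mem_Icc] at ha hb
      rcases Sym2.eq_iff.mp hab with ⟨h1, h2⟩ | ⟨h1, h2⟩
      · exact hvinj a b (by omega) (by omega) h2
      · have e1 := hvinj (a - 1) b (by omega) (by omega) h1
        have e2 := hvinj a (b - 1) (by omega) (by omega) h2
        omega
  refine ⟨hTinj, fun i hi => hTstep i (Finset.mem_Icc.mp hi).1, hTk, ?_, ?_⟩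
  · intro x hx
    simp only [Finset.mem_Icc] at hx
    have hxmem : x ∈ (Finset.Icc 1 k).image T := by
      rw [himg]; simp only [Finset.mem_Icc]; omega
    simp only [Finset.mem_image] at hxmem
    obtain ⟨i₀, hi₀, hTi₀⟩ := hxmem
    simp only [Finset.mem_Icc] at hi₀
    have hi₀k : i₀ ≠ k := by
      intro h; rw [h, hTk] at hTi₀; omega
    rw [hE]
    have hfil : (Finset.Icc 1 (p - 2)).filter (fun i => T i = x) = {i₀, k + i₀} := by
      ext j
      simp only [Finset.mem_filter, Finset.mem_Icc, Finset.mem_insert, Finset.mem_singleton]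
      constructor
      · rintro ⟨⟨hj1, hj2⟩, hTj⟩
        have hm := hTeq j i₀ hj1 hi₀.1 (hTj.trans hTi₀.symm)
        rcases le_total j i₀ with h | h
        · rcases modHelper hk1 h (by omega) hm with h' | h' <;> omega
        · rcases modHelper hk1 h (by omega) hm.symm with h' | h' <;> omega
      · rintro (rfl | rfl)
        · exact ⟨⟨hi₀.1, by omega⟩, hTi₀⟩
        · exact ⟨⟨by omega, by omega⟩, (hTstep i₀ hi₀.1).trans hTi₀⟩
    rw [hfil, Finset.card_insert_of_notMem (by simp; omega), Finset.card_singleton]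
  · rw [hE]
    have hfil : (Finset.Icc 1 (p - 2)).filter (fun i => T i = 1) = {k} := by
      ext j
      simp only [Finset.mem_filter, Finset.mem_Icc, Finset.mem_singleton]
      constructor
      · rintro ⟨⟨hj1, hj2⟩, hTj⟩
        have hm := hTeq j k hj1 hk1 (hTj.trans hTk.symm)
        rcases le_total j k with h | h
        · rcases modHelper hk1 h (by omega) hm with h' | h' <;> omega
        · rcases modHelper hk1 h (by omega) hm.symm with h' | h' <;> omega
      · rintro rfl
        exact ⟨⟨hk1, by omega⟩, hTk⟩
    rw [hfil, Finset.card_singleton]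
end
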